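/- arXiv:2409.08332 — 12 statements merged into one kernel-verified Lean document; each statement's English description precedes it below -/
import Mathlib

section
/- Let L be an n×n complex matrix and P a projection with Q := 1 − P. Then for every real t ≥ 0, ∫_{0}^{t} exp(τ • (Q*L*Q)) * Q * L * P * exp(−τ • L) dτ = Q − exp(t • (Q*L*Q)) * Q * exp(−t • L). -/
open NormedSpace

attribute [local instance] Matrix.frobeniusNormedAddCommGroup Matrix.frobeniusNormedSpace
  Matrix.frobeniusNormedRing Matrix.frobeniusNormedAlgebra

/-- Closed form of the integral `Σ(t)` appearing in the TCL master equation: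
`∫₀ᵗ exp(τ • QLQ) * Q * L * P * exp(-τ • L) dτ = Q - exp(t • QLQ) * Q * exp(-t • L)`. -/
theorem stmt_1 {n : Type*} [Fintype n] [DecidableEq n]
    (L P : Matrix n n ℂ) (hP : P * P = P) (t : ℝ) (ht : 0 ≤ t) :
    ∫ τ in (0:ℝ)..t,
        exp (τ • ((1 - P) * L * (1 - P))) * (1 - P) * L * P * exp ((-τ) • L)
      = (1 - P) - exp (t • ((1 - P) * L * (1 - P))) * (1 - P) * exp ((-t) • L) := by
  set Q : Matrix n n ℂ := 1 - P with hQdef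
  set A : Matrix n n ℂ := Q * L * Q with hAdef
  have hQQ : Q * Q = Q := by
    simp only [hQdef, sub_mul, mul_sub, one_mul, mul_one, hP]
    abel
  have hAQ : A * Q = Q * L * Q := by rw [hAdef, mul_assoc, hQQ]
  have hQLP : Q * L * P = Q * L - Q * L * Q := by rw [hQdef]; noncomm_ring
  have key : ∀ τ : ℝ, HasDerivAt (fun τ : ℝ => Q - exp (τ • A) * Q * exp ((-τ) • L))
      (exp (τ • A) * Q * L * P * exp ((-τ) • L)) τ := by
    intro τ
    have h1 : HasDerivAt (fun τ : ℝ => exp (τ • A)) (exp (τ • A) * A) τ := by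
      exact hasDerivAt_exp_smul_const A τ
    have h2 : HasDerivAt (fun τ : ℝ => exp ((-τ) • L)) (exp ((-τ) • L) * (-L)) τ := by
      have := hasDerivAt_exp_smul_const (-L) τ
      simp only [smul_neg, ← neg_smul] at this
      exact this
    have hG : HasDerivAt (fun τ : ℝ => exp (τ • A) * Q * exp ((-τ) • L))
        ((exp (τ • A) * A) * Q * exp ((-τ) • L)
          + exp (τ • A) * Q * (exp ((-τ) • L) * (-L))) τ := by
      have := ((h1.mul_const Q).mul h2)
      exact this.congr_deriv (by simp only [mul_assoc])
    have hcomm : exp ((-τ) • L) * L = L * exp ((-τ) • L) :=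
      (((Commute.refl L).smul_right ((-τ : ℝ))).exp_right).symm.eq
    have hF : HasDerivAt (fun τ : ℝ => Q - exp (τ • A) * Q * exp ((-τ) • L))
        (-((exp (τ • A) * A) * Q * exp ((-τ) • L)
          + exp (τ • A) * Q * (exp ((-τ) • L) * (-L)))) τ := by
      exact ((hasDerivAt_const τ Q).sub hG).congr_deriv (by rw [zero_sub])
    convert hF using 1
    rw [mul_neg, hcomm]
    trans (exp (τ • A) * (Q * L - Q * L * Q) * exp ((-τ) • L))
    · rw [← hQLP]; noncomm_ring
    · rw [← hAQ]; noncomm_ring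
  have hcont : Continuous fun τ : ℝ =>
      exp (τ • A) * Q * L * P * exp ((-τ) • L) := by
    have c1 : Continuous fun τ : ℝ => exp (τ • A) :=
      exp_continuous.comp (continuous_id.smul continuous_const)
    have c2 : Continuous fun τ : ℝ => exp ((-τ) • L) :=
      exp_continuous.comp (continuous_neg.smul continuous_const)
    exact ((((c1.mul continuous_const).mul continuous_const).mul
      continuous_const).mul c2)
  have hint := hcont.intervalIntegrable (μ := MeasureTheory.volume) 0 t
  have hFTC := intervalIntegral.integral_eq_sub_of_hasDerivAt
    (f := fun τ : ℝ => Q - exp (τ • A) * Q * exp ((-τ) • L))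
    (fun τ _ => key τ) hint
  rw [hFTC]
  simp
end

section
/- Let P be a projection with Q := 1 − P, and let E be any n×n complex matrix. If Π := Q + P * E * P is invertible, then Q + P * E is invertible and (Q + P * E)⁻¹ = P * Π⁻¹ * P + Q − P * Π⁻¹ * P * E * Q. -/
/-- If `P` is a projection, `Q = 1 - P`, and `Π = Q + P * E * P` is invertible, then
`Q + P * E` is invertible with inverse `P * Π⁻¹ * P + Q - P * Π⁻¹ * P * E * Q`. -/
theorem stmt_3 {n : Type*} [Fintype n] [DecidableEq n]
    (P E : Matrix n n ℂ) (hP : P * P = P)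
    (hPi : IsUnit ((1 - P) + P * E * P)) :
    IsUnit ((1 - P) + P * E) ∧
    ((1 - P) + P * E)⁻¹ =
      P * ((1 - P) + P * E * P)⁻¹ * P + (1 - P)
        - P * ((1 - P) + P * E * P)⁻¹ * P * E * (1 - P) := by
  set Q : Matrix n n ℂ := 1 - P with hQ
  set Pi : Matrix n n ℂ := Q + P * E * P with hPidef
  set J : Matrix n n ℂ := Pi⁻¹ with hJ
  have hPQ : P * Q = 0 := by rw [hQ, mul_sub, mul_one, hP, sub_self]
  have hQP : Q * P = 0 := by rw [hQ, sub_mul, one_mul, hP, sub_self]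
  have hQQ : Q * Q = Q := by rw [hQ, sub_mul, one_mul, mul_sub, mul_one, hP]; noncomm_ring
  have hdet : IsUnit Pi.det := (Matrix.isUnit_iff_isUnit_det _).mp hPi
  have hInv1 : Pi * J = 1 := Matrix.mul_nonsing_inv _ hdet
  have hInv2 : J * Pi = 1 := Matrix.nonsing_inv_mul _ hdet
  have hPPi : P * Pi = P * E * P := by
    rw [hPidef, mul_add, hPQ, zero_add, ← Matrix.mul_assoc, ← Matrix.mul_assoc, hP]
  have hPiP : Pi * P = P * E * P := by
    rw [hPidef, add_mul, hQP, zero_add, Matrix.mul_assoc, hP]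
  -- P * E * P * J = P
  have key1 : P * E * P * J = P := by
    calc P * E * P * J = P * Pi * J := by rw [hPPi]
    _ = P * (Pi * J) := by rw [Matrix.mul_assoc]
    _ = P := by rw [hInv1, mul_one]
  -- J * (P * E * P) relation: P * J * (P*E*P) = P
  have key2 : P * J * (P * E * P) = P := by
    calc P * J * (P * E * P) = P * J * (Pi * P) := by rw [hPiP]
    _ = P * (J * Pi) * P := by rw [Matrix.mul_assoc, Matrix.mul_assoc, Matrix.mul_assoc]
    _ = P := by rw [hInv2, mul_one, hP]
  set A : Matrix n n ℂ := Q + P * E with hA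
  set B : Matrix n n ℂ := P * J * P + Q - P * J * P * E * Q with hB
  have hAB : A * B = 1 := by
    have hPE_decomp : P * E = P * E * P + P * E * Q := by
      rw [hQ]; noncomm_ring
    rw [hA, hB]
    rw [mul_sub, add_mul, add_mul, mul_add, mul_add]
    have h1 : Q * (P * J * P) = 0 := by
      rw [← Matrix.mul_assoc, ← Matrix.mul_assoc, hQP, Matrix.zero_mul, Matrix.zero_mul]
    have h2 : P * E * (P * J * P) = P := by
      rw [← Matrix.mul_assoc, ← Matrix.mul_assoc, key1, hP]
    have h3 : Q * (P * J * P * E * Q) = 0 := by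
      rw [← Matrix.mul_assoc, ← Matrix.mul_assoc, ← Matrix.mul_assoc, ← Matrix.mul_assoc, hQP]
      simp
    have h4 : P * E * (P * J * P * E * Q) = P * E * Q := by
      simp only [← Matrix.mul_assoc]
      rw [key1, hP]
    rw [h1, h2, h3, h4, hQQ]
    have hPEQ : P * E * Q = P * E - P * E * P := by
      rw [hQ]; noncomm_ring
    rw [hPEQ, hQ]
    noncomm_ring
  have hBA : B * A = 1 := by
    rw [hA, hB]
    rw [sub_mul, add_mul, mul_add, mul_add, mul_add]
    have h1 : P * J * P * Q = 0 := by rw [Matrix.mul_assoc, hPQ, mul_zero]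
    have h2 : Q * (P * E) = 0 := by rw [← Matrix.mul_assoc, hQP, Matrix.zero_mul]
    have h3 : P * J * P * E * Q * Q = P * J * P * E * Q := by
      rw [Matrix.mul_assoc (P * J * P * E) Q Q, hQQ]
    have h4 : P * J * P * E * Q * (P * E) = 0 := by
      rw [Matrix.mul_assoc (P * J * P * E) Q, ← Matrix.mul_assoc Q P E, hQP]
      simp
    rw [h1, h2, h3, h4, hQQ]
    have hsum : P * E * P + P * E * Q = P * E := by rw [hQ]; noncomm_ring
    have h5 : P * J * P * (P * E) = P * J * (P * E * P) + P * J * (P * E * Q) := by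
      rw [← mul_add, hsum]
      simp only [Matrix.mul_assoc]
      rw [← Matrix.mul_assoc P P E, hP]
    rw [h5, key2]
    have h6 : P * J * P * E * Q = P * J * (P * E * Q) := by
      simp only [Matrix.mul_assoc]
    rw [h6, hQ]
    noncomm_ring
  have hUnit : IsUnit A := ⟨⟨A, B, hAB, hBA⟩, rfl⟩
  exact ⟨hUnit, Matrix.inv_eq_right_inv hAB⟩
end

section
/- Let L be an n×n complex matrix, P a projection with Q := 1 − P, and t ≥ 0 a real number. Define Σ(t) := Q − exp(t • (Q*L*Q)) * Q * exp(−t • L) and Π(t) := Q + P * exp(t • L) * P. If Π(t) is invertible, then 1 − Σ(t) is invertible and (1 − Σ(t))⁻¹ * exp(t • (Q*L*Q)) * Q = (1 − exp(t • L) * P * (Π(t))⁻¹ * P) * exp(t • L) * Q. -/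
open NormedSpace

attribute [local instance] Matrix.frobeniusNormedAddCommGroup Matrix.frobeniusNormedSpace
  Matrix.frobeniusNormedRing

attribute [local instance] Matrix.frobeniusNormedAlgebra

private lemma stmt5_mul_exp_of_mul_eq_zero {n : Type*} [Fintype n] [DecidableEq n]
    (P x : Matrix n n ℂ) (h : P * x = 0) : P * NormedSpace.exp x = P := by
  have hs : Summable fun k : ℕ => ((Nat.factorial k : ℂ)⁻¹) • x ^ k := expSeries_summable' x
  have h2 : P * NormedSpace.exp x = ∑' k : ℕ, P * (((Nat.factorial k : ℂ)⁻¹) • x ^ k) := by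
    rw [exp_eq_tsum ℂ]
    exact (hs.tsum_mul_left P).symm
  rw [h2, tsum_eq_single 0]
  · simp
  · intro k hk
    obtain ⟨m, rfl⟩ := Nat.exists_eq_succ_of_ne_zero hk
    rw [Matrix.mul_smul, pow_succ', ← Matrix.mul_assoc, h, Matrix.zero_mul, smul_zero]

private lemma stmt5_exp_mul_of_mul_eq_zero {n : Type*} [Fintype n] [DecidableEq n]
    (P x : Matrix n n ℂ) (h : x * P = 0) : NormedSpace.exp x * P = P := by
  have hs : Summable fun k : ℕ => ((Nat.factorial k : ℂ)⁻¹) • x ^ k := expSeries_summable' x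
  have h2 : NormedSpace.exp x * P = ∑' k : ℕ, (((Nat.factorial k : ℂ)⁻¹) • x ^ k) * P := by
    rw [exp_eq_tsum ℂ]
    exact (hs.tsum_mul_right P).symm
  rw [h2, tsum_eq_single 0]
  · simp
  · intro k hk
    obtain ⟨m, rfl⟩ := Nat.exists_eq_succ_of_ne_zero hk
    rw [Matrix.smul_mul, pow_succ, Matrix.mul_assoc, h, Matrix.mul_zero, smul_zero]

private lemma stmt5_exp_mul_exp_neg {n : Type*} [Fintype n] [DecidableEq n]
    (A : Matrix n n ℂ) : NormedSpace.exp A * NormedSpace.exp (-A) = 1 := by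
  rw [← Matrix.exp_add_of_commute A (-A) (Commute.neg_right (Commute.refl A)), add_neg_cancel, exp_zero]

private lemma stmt5_exp_neg_mul_exp {n : Type*} [Fintype n] [DecidableEq n]
    (A : Matrix n n ℂ) : NormedSpace.exp (-A) * NormedSpace.exp A = 1 := by
  rw [← Matrix.exp_add_of_commute (-A) A (Commute.neg_left (Commute.refl A)), neg_add_cancel, exp_zero]


private lemma stmt5_key {R : Type*} [Ring R] (P E E' F F' Pi' : R)
    (hP : P*P = P) (hEE' : E*E' = 1) (hE'E : E'*E = 1)
    (hPF : P*F = P) (hFP : F*P = P) (hPF' : P*F' = P) (hF'P : F'*P = P)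
    (hFF' : F*F' = 1) (hF'F : F'*F = 1)
    (hPi : Pi' * ((1-P) + P*E*P) = 1) (hPi2 : ((1-P)+P*E*P) * Pi' = 1) :
    ((1 - ((1-P) - F*(1-P)*E')) *
        ((P + (1-P)*(E - E*P*Pi'*P*E)*(1-P)*(F'-P)) - (1-P)*(E - E*P*Pi'*P*E)*(1-P)*E'*P) = 1)
    ∧ (((P + (1-P)*(E - E*P*Pi'*P*E)*(1-P)*(F'-P)) - (1-P)*(E - E*P*Pi'*P*E)*(1-P)*E'*P) *
        (1 - ((1-P) - F*(1-P)*E')) = 1)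
    ∧ ((1 - ((1-P) - F*(1-P)*E')) * ((1 - E*P*Pi'*P) * E * (1-P)) = F * (1-P)) := by
  have b10 : P*E*P*Pi'*P = P := by
    have h : P*E*P*Pi' = P := by
      have h0 := congrArg (fun x => P * x) hPi2
      simp only [mul_one] at h0
      rw [← mul_assoc, mul_add, mul_sub, mul_one, hP, sub_self, zero_add,
        ← mul_assoc, ← mul_assoc, hP] at h0
      exact h0
    rw [h, hP]
  have b11 : Pi'*P*E*P = P := by
    have h0 := congrArg (fun x => x * P) hPi
    simp only [one_mul] at h0
    rw [mul_assoc, add_mul, sub_mul, one_mul, hP, sub_self, zero_add,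
      mul_assoc (P*E), hP, ← mul_assoc, ← mul_assoc] at h0
    exact h0
  have r1 : ∀ x:R, P*(P*x) = P*x := fun x => by rw [← mul_assoc, hP]
  have r2 : ∀ x:R, E*(E'*x) = x := fun x => by rw [← mul_assoc, hEE', one_mul]
  have r3 : ∀ x:R, E'*(E*x) = x := fun x => by rw [← mul_assoc, hE'E, one_mul]
  have r4 : ∀ x:R, P*(F*x) = P*x := fun x => by rw [← mul_assoc, hPF]
  have r5 : ∀ x:R, F*(P*x) = P*x := fun x => by rw [← mul_assoc, hFP]
  have r6 : ∀ x:R, P*(F'*x) = P*x := fun x => by rw [← mul_assoc, hPF']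
  have r7 : ∀ x:R, F'*(P*x) = P*x := fun x => by rw [← mul_assoc, hF'P]
  have r8 : ∀ x:R, F*(F'*x) = x := fun x => by rw [← mul_assoc, hFF', one_mul]
  have r9 : ∀ x:R, F'*(F*x) = x := fun x => by rw [← mul_assoc, hF'F, one_mul]
  have r10 : ∀ x:R, P*(E*(P*(Pi'*(P*x)))) = P*x := fun x => by
    simp only [← mul_assoc]; rw [b10]
  have r11 : ∀ x:R, Pi'*(P*(E*(P*x))) = P*x := fun x => by
    simp only [← mul_assoc]; rw [b11]
  have b10' : P*(E*(P*(Pi'*P))) = P := by simp only [← mul_assoc]; exact b10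
  have b11' : Pi'*(P*(E*P)) = P := by simp only [← mul_assoc]; exact b11
  refine ⟨?_, ?_, ?_⟩ <;>
    · simp only [mul_sub, sub_mul, mul_add, add_mul, mul_one, one_mul, mul_assoc,
        r1, r2, r3, r4, r5, r6, r7, r8, r9, r10, r11, hP, hEE', hE'E, hPF, hFP, hPF',
        hF'P, hFF', hF'F, b10', b11']
      abel

/-- With `Σ(t) = Q - exp(t • QLQ) * Q * exp(-t • L)` and `Π(t) = Q + P * exp(t • L) * P`,
if `Π(t)` is invertible then so is `1 - Σ(t)`, and
`(1 - Σ(t))⁻¹ * exp(t • QLQ) * Q = (1 - exp(t • L) * P * Π(t)⁻¹ * P) * exp(t • L) * Q`. -/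
theorem stmt_5 {n : Type*} [Fintype n] [DecidableEq n]
    (L P : Matrix n n ℂ) (hP : P * P = P) (t : ℝ) (ht : 0 ≤ t)
    (hPi : IsUnit ((1 - P) + P * NormedSpace.exp (t • L) * P)) :
    IsUnit (1 - ((1 - P) - NormedSpace.exp (t • ((1 - P) * L * (1 - P))) * (1 - P) * NormedSpace.exp ((-t) • L))) ∧
    (1 - ((1 - P) - NormedSpace.exp (t • ((1 - P) * L * (1 - P))) * (1 - P) * NormedSpace.exp ((-t) • L)))⁻¹
        * NormedSpace.exp (t • ((1 - P) * L * (1 - P))) * (1 - P)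
      = (1 - NormedSpace.exp (t • L) * P * ((1 - P) + P * NormedSpace.exp (t • L) * P)⁻¹ * P)
        * NormedSpace.exp (t • L) * (1 - P) := by
  set E := NormedSpace.exp (t • L) with hE
  set E' := NormedSpace.exp ((-t) • L) with hE'
  set F := NormedSpace.exp (t • ((1 - P) * L * (1 - P))) with hF
  set F' := NormedSpace.exp (-(t • ((1 - P) * L * (1 - P)))) with hF'
  set Pi' := ((1 - P) + P * E * P)⁻¹ with hPi'def
  have hPQ : P * (1 - P) = 0 := by rw [mul_sub, mul_one, hP, sub_self]
  have hQP : (1 - P) * P = 0 := by rw [sub_mul, one_mul, hP, sub_self]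
  have hPA : P * (t • ((1 - P) * L * (1 - P))) = 0 := by
    rw [Matrix.mul_smul, ← Matrix.mul_assoc, ← Matrix.mul_assoc, hPQ, Matrix.zero_mul,
      Matrix.zero_mul, smul_zero]
  have hAP : (t • ((1 - P) * L * (1 - P))) * P = 0 := by
    rw [Matrix.smul_mul, Matrix.mul_assoc, Matrix.mul_assoc, hQP, Matrix.mul_zero,
      Matrix.mul_zero, smul_zero]
  have hEE' : E * E' = 1 := by
    rw [hE, hE', neg_smul]; exact stmt5_exp_mul_exp_neg _
  have hE'E : E' * E = 1 := by
    rw [hE, hE', neg_smul]; exact stmt5_exp_neg_mul_exp _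
  have hFF' : F * F' = 1 := stmt5_exp_mul_exp_neg _
  have hF'F : F' * F = 1 := stmt5_exp_neg_mul_exp _
  have hPF : P * F = P := stmt5_mul_exp_of_mul_eq_zero _ _ hPA
  have hFP : F * P = P := stmt5_exp_mul_of_mul_eq_zero _ _ hAP
  have hPF' : P * F' = P := stmt5_mul_exp_of_mul_eq_zero _ _ (by rw [mul_neg, hPA, neg_zero])
  have hF'P : F' * P = P := stmt5_exp_mul_of_mul_eq_zero _ _ (by rw [neg_mul, hAP, neg_zero])
  have hdet := (Matrix.isUnit_iff_isUnit_det _).mp hPi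
  have hPiL : Pi' * ((1 - P) + P * E * P) = 1 := Matrix.nonsing_inv_mul _ hdet
  have hPiR : ((1 - P) + P * E * P) * Pi' = 1 := Matrix.mul_nonsing_inv _ hdet
  obtain ⟨k1, k2, k3⟩ := stmt5_key P E E' F F' Pi' hP hEE' hE'E hPF hFP hPF' hF'P hFF' hF'F
    hPiL hPiR
  have hM : IsUnit (1 - ((1 - P) - F * (1 - P) * E')) :=
    ⟨⟨_, _, k1, k2⟩, rfl⟩
  refine ⟨hM, ?_⟩
  have cancel : ∀ (M X Y : Matrix n n ℂ), IsUnit M → M * X = Y → M⁻¹ * Y = X := by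
    intro M X Y hu h
    rw [← h, ← Matrix.mul_assoc,
      Matrix.nonsing_inv_mul _ ((Matrix.isUnit_iff_isUnit_det _).mp hu), Matrix.one_mul]
  rw [Matrix.mul_assoc]
  exact cancel _ _ _ hM k3
end

section
/- Let L be an n×n complex matrix, P a projection with Q := 1 − P, and t ≥ 0 a real number. Define Σ(t) := Q − exp(t • (Q*L*Q)) * Q * exp(−t • L). If 1 − Σ(t) is invertible, then exp(t • L) = (1 − Σ(t))⁻¹ * exp(t • (Q*L*Q)) * Q + (1 − Σ(t))⁻¹ * P * exp(t • L). (This is the exact time-convolutionless decomposition ρ(t) = J(t) Q ρ(0) + P(t) ρ(t) applied to ρ(t) = exp(tL) ρ(0).) -/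
open NormedSpace

attribute [local instance] Matrix.frobeniusNormedAddCommGroup Matrix.frobeniusNormedSpace
  Matrix.frobeniusNormedRing

/-- Exact time-convolutionless decomposition: with
`Σ(t) = Q - exp(t • QLQ) * Q * exp(-t • L)`, if `1 - Σ(t)` is invertible then
`exp(t • L) = (1 - Σ(t))⁻¹ * exp(t • QLQ) * Q + (1 - Σ(t))⁻¹ * P * exp(t • L)`. -/
theorem stmt_8 {n : Type*} [Fintype n] [DecidableEq n]
    (L P : Matrix n n ℂ) (hP : P * P = P) (t : ℝ) (ht : 0 ≤ t)
    (hS : IsUnit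
      (1 - ((1 - P) - exp (t • ((1 - P) * L * (1 - P))) * (1 - P) * exp ((-t) • L)))) :
    exp (t • L)
      = (1 - ((1 - P) - exp (t • ((1 - P) * L * (1 - P))) * (1 - P) * exp ((-t) • L)))⁻¹
          * exp (t • ((1 - P) * L * (1 - P))) * (1 - P)
        + (1 - ((1 - P) - exp (t • ((1 - P) * L * (1 - P))) * (1 - P) * exp ((-t) • L)))⁻¹
          * P * exp (t • L) := by
  set X := exp (t • ((1 - P) * L * (1 - P))) with hX
  set E := exp (t • L) with hE
  set A := 1 - ((1 - P) - X * (1 - P) * exp ((-t) • L)) with hA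
  have h1 : exp ((-t) • L) * E = 1 := by
    rw [hE, neg_smul, ← Matrix.exp_add_of_commute (-(t • L)) (t • L) ((Commute.refl (t • L)).neg_left),
      neg_add_cancel, NormedSpace.exp_zero]
  have hinv : A⁻¹ * A = 1 :=
    Matrix.nonsing_inv_mul _ ((Matrix.isUnit_iff_isUnit_det _).mp hS)
  have key : A * E = X * (1 - P) + P * E := by
    rw [hA]
    have : (1 - ((1 - P) - X * (1 - P) * exp ((-t) • L))) * E
        = P * E + X * (1 - P) * (exp ((-t) • L) * E) := by noncomm_ring
    rw [this, h1, mul_one, add_comm]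
  calc E = A⁻¹ * (A * E) := by rw [← mul_assoc, hinv, one_mul]
    _ = A⁻¹ * X * (1 - P) + A⁻¹ * P * E := by rw [key, mul_add, mul_assoc, mul_assoc]
end

section
/- Let L be an n×n complex matrix and P a projection with Q := 1 − P. If Q * L * P = 0, then for every real t ≥ 0, Q * exp(t • L) = exp(t • (Q*L*Q)) * Q. -/
attribute [local instance] Matrix.frobeniusNormedAlgebra
set_option maxHeartbeats 400000
open NormedSpace

attribute [local instance] Matrix.frobeniusNormedAddCommGroup Matrix.frobeniusNormedSpace
  Matrix.frobeniusNormedRing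

/-- If `Q * L * P = 0` (the range of `P` is `L`-invariant in the complementary sense),
then `Q * exp(t • L) = exp(t • QLQ) * Q` for all `t ≥ 0`. -/
theorem stmt_9 {n : Type*} [Fintype n] [DecidableEq n]
    (L P : Matrix n n ℂ) (hP : P * P = P)
    (hQLP : (1 - P) * L * P = 0) (t : ℝ) (ht : 0 ≤ t) :
    (1 - P) * exp (t • L) = exp (t • ((1 - P) * L * (1 - P))) * (1 - P) := by
  set Q := 1 - P with hQdef
  have hQ : Q * Q = Q := by
    simp only [hQdef, sub_mul, mul_sub, one_mul, mul_one, hP]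
    abel
  have hQL : Q * L = Q * L * Q := by
    rw [hQdef, mul_sub, mul_one, hQLP, sub_zero]
  have key : ∀ k : ℕ, Q * (t • L) ^ k = (t • (Q * L * Q)) ^ k * Q := by
    intro k
    induction k with
    | zero => simp
    | succ k ih =>
      have h1 : (t • (Q * L * Q)) * Q = Q * (t • L) := by
        rw [smul_mul_assoc, mul_assoc (Q * L) Q Q, hQ, ← hQL, mul_smul_comm]
      calc Q * (t • L) ^ (k + 1) = (Q * (t • L)) * (t • L) ^ k := by
            rw [pow_succ', ← mul_assoc]
        _ = ((t • (Q * L * Q)) * Q) * (t • L) ^ k := by rw [h1]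
        _ = (t • (Q * L * Q)) * ((t • (Q * L * Q)) ^ k * Q) := by rw [mul_assoc, ih]
        _ = (t • (Q * L * Q)) ^ (k + 1) * Q := by rw [← mul_assoc, ← pow_succ']
  have hs1 : Summable (fun k : ℕ => ((Nat.factorial k : ℂ))⁻¹ • (t • L) ^ k) :=
    expSeries_summable' (t • L)
  have hs2 : Summable (fun k : ℕ => ((Nat.factorial k : ℂ))⁻¹ • (t • (Q * L * Q)) ^ k) :=
    expSeries_summable' (t • (Q * L * Q))
  calc Q * exp (t • L) = Q * ∑' k : ℕ, ((Nat.factorial k : ℂ))⁻¹ • (t • L) ^ k := by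
        rw [exp_eq_tsum ℂ]
    _ = ∑' k : ℕ, Q * (((Nat.factorial k : ℂ))⁻¹ • (t • L) ^ k) := (hs1.tsum_mul_left Q).symm
    _ = ∑' k : ℕ, (((Nat.factorial k : ℂ))⁻¹ • (t • (Q * L * Q)) ^ k) * Q := by
        refine tsum_congr fun k => ?_
        rw [mul_smul_comm, key k, smul_mul_assoc]
    _ = (∑' k : ℕ, ((Nat.factorial k : ℂ))⁻¹ • (t • (Q * L * Q)) ^ k) * Q := hs2.tsum_mul_right Q
    _ = exp (t • (Q * L * Q)) * Q := by rw [exp_eq_tsum ℂ]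
end

section
/- Let L be an n×n complex matrix, S a finite type, and for each s ∈ S let r s, l s : n → ℂ and λ s ∈ ℂ be such that L *ᵥ (r s) = λ s • (r s). Suppose the S×S matrix N defined by N s s' = star (l s) ⬝ᵥ (r s') is invertible, and define P := ∑_{s,s' ∈ S} (N⁻¹ s s') • vecMulVec (r s) (star (l s')). Then: (a) P * P = P; (b) P *ᵥ (r s) = r s for every s ∈ S; and (c) (1 − P) * L * P = 0, i.e. the range of the projection P is an L-invariant subspace. -/
open Matrix

/-- The overlap matrix `N s s' = ⟪l s, r s'⟫`. -/
noncomputable def overlapMat {n S : Type*} [Fintype n]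
    (r l : S → n → ℂ) : Matrix S S ℂ :=
  Matrix.of fun s s' => star (l s) ⬝ᵥ r s'

/-- The (oblique) spectral projector `P = ∑ s s', (N⁻¹)_{s s'} • r s (l s')ᴴ`. -/
noncomputable def obliqueProj {n S : Type*} [Fintype n] [Fintype S] [DecidableEq S]
    (r l : S → n → ℂ) : Matrix n n ℂ :=
  ∑ s : S, ∑ s' : S, ((overlapMat r l)⁻¹ s s') • vecMulVec (r s) (star (l s'))

lemma sum_mulVec' {n m S : Type*} [Fintype n] [Fintype S] (A : S → Matrix m n ℂ) (v : n → ℂ) :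
    (∑ s : S, A s) *ᵥ v = ∑ s : S, A s *ᵥ v := by
  ext i
  simp only [mulVec, dotProduct, Finset.sum_apply, Matrix.sum_apply, Finset.sum_mul]
  rw [Finset.sum_comm]

lemma mul_vecMulVec' {n m : Type*} [Fintype n] (M : Matrix m n ℂ) (a : n → ℂ) (b : n → ℂ) :
    M * vecMulVec a b = vecMulVec (M *ᵥ a) b := by
  ext i j
  simp [mul_apply, vecMulVec_apply, mulVec, dotProduct, Finset.sum_mul, mul_assoc]

lemma vecMulVec_mulVec' {n : Type*} [Fintype n] (a b v : n → ℂ) :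
    vecMulVec a b *ᵥ v = (b ⬝ᵥ v) • a := by
  ext i
  simp [vecMulVec_apply, mulVec, dotProduct, Finset.mul_sum, mul_assoc, mul_comm, mul_left_comm]

/-- If `r s` are eigenvectors of `L` and the overlap matrix `N` is invertible, then
`P = ∑ (N⁻¹)_{ss'} • r s (l s')ᴴ` is a projection, fixes each `r s`, and its range
is an `L`-invariant subspace: `(1 - P) * L * P = 0`. -/
theorem stmt_10 {n S : Type*} [Fintype n] [DecidableEq n] [Fintype S] [DecidableEq S]
    (L : Matrix n n ℂ) (r l : S → n → ℂ) (lam : S → ℂ)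
    (heig : ∀ s, L *ᵥ r s = lam s • r s)
    (hN : IsUnit (overlapMat r l)) :
    obliqueProj r l * obliqueProj r l = obliqueProj r l ∧
    (∀ s, obliqueProj r l *ᵥ r s = r s) ∧
    (1 - obliqueProj r l) * L * obliqueProj r l = 0 := by
  set N := overlapMat r l with hNdef
  have hinv : N⁻¹ * N = 1 := nonsing_inv_mul N ((isUnit_iff_isUnit_det N).mp hN)
  have hfix : ∀ t, obliqueProj r l *ᵥ r t = r t := by
    intro t
    have : obliqueProj r l *ᵥ r t = ∑ s : S, ((N⁻¹ * N) s t) • r s := by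
      rw [obliqueProj]
      rw [sum_mulVec']
      refine Finset.sum_congr rfl fun s _ => ?_
      rw [sum_mulVec', mul_apply]
      rw [Finset.sum_smul]
      refine Finset.sum_congr rfl fun s' _ => ?_
      rw [Matrix.smul_mulVec, vecMulVec_mulVec']
      rw [smul_smul]
      rfl
    rw [this, hinv]
    simp [one_apply, ite_smul]
  have hPvv : ∀ (a : S) (b : n → ℂ), obliqueProj r l * vecMulVec (r a) b = vecMulVec (r a) b := by
    intro a b
    rw [mul_vecMulVec', hfix]
  have key : ∀ Q : Matrix n n ℂ, (∀ (a : S) (b : n → ℂ),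
      Q * vecMulVec (r a) b = vecMulVec (r a) b) → Q * obliqueProj r l = obliqueProj r l := by
    intro Q hQ
    rw [obliqueProj, Finset.mul_sum]
    refine Finset.sum_congr rfl fun s _ => ?_
    rw [Finset.mul_sum]
    refine Finset.sum_congr rfl fun s' _ => ?_
    rw [Matrix.mul_smul, hQ]
  have hPP : obliqueProj r l * obliqueProj r l = obliqueProj r l := key _ hPvv
  refine ⟨hPP, hfix, ?_⟩
  have hLP : obliqueProj r l * (L * obliqueProj r l) = L * obliqueProj r l := by
    have hLPexp : L * obliqueProj r l
        = ∑ s : S, ∑ s' : S, (lam s * N⁻¹ s s') • vecMulVec (r s) (star (l s')) := by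
      rw [show obliqueProj r l = ∑ s : S, ∑ s' : S, (N⁻¹ s s') • vecMulVec (r s) (star (l s')) from rfl]
      rw [Finset.mul_sum]
      refine Finset.sum_congr rfl fun s _ => ?_
      rw [Finset.mul_sum]
      refine Finset.sum_congr rfl fun s' _ => ?_
      rw [Matrix.mul_smul, mul_vecMulVec', heig]
      rw [mul_comm, ← smul_smul]
      congr 1
      ext i j
      simp [vecMulVec_apply, mul_assoc]
    rw [hLPexp, Finset.mul_sum]
    refine Finset.sum_congr rfl fun s _ => ?_
    rw [Finset.mul_sum]
    refine Finset.sum_congr rfl fun s' _ => ?_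
    rw [Matrix.mul_smul, hPvv]
  rw [Matrix.sub_mul, Matrix.sub_mul, Matrix.one_mul, Matrix.mul_assoc, hLP, sub_self]
end

section
/- Under the adiabatic-elimination eigensystem hypotheses (stated in the context), the time-dependent projector converges exponentially fast: there exists a constant C ≥ 0 such that for all real t ≥ 0, ‖exp(t • L) * P * (Π(t))⁻¹ * P − P∞‖ ≤ C * exp(−δ * t), where P∞ := ∑_{s,s' ∈ S} (N⁻¹ s s') • vecMulVec (r s) (star (l⁰ s')) and ‖·‖ is the Frobenius norm on matrices. -/
open Matrix NormedSpace

attribute [local instance] Matrix.frobeniusNormedAddCommGroup Matrix.frobeniusNormedSpace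
  Matrix.frobeniusNormedRing

/-- The projection `P = ∑_{s ∈ S} r⁰_s (l⁰_s)ᴴ` onto the slow modes of the unperturbed
generator. -/
noncomputable def slowProj {n S F : Type*} [Fintype n] [Fintype S]
    (r0 l0 : S ⊕ F → n → ℂ) : Matrix n n ℂ :=
  ∑ s : S, vecMulVec (r0 (Sum.inl s)) (star (l0 (Sum.inl s)))

/-- The overlap matrix `N s s' = ⟪l⁰_s, r_{s'}⟫`. -/
noncomputable def overlapN {n S F : Type*} [Fintype n]
    (l0 r : S ⊕ F → n → ℂ) : Matrix S S ℂ :=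
  Matrix.of fun s s' => star (l0 (Sum.inl s)) ⬝ᵥ r (Sum.inl s')

/-- The overlap matrix `M s s' = ⟪l_s, r⁰_{s'}⟫`. -/
noncomputable def overlapM {n S F : Type*} [Fintype n]
    (l r0 : S ⊕ F → n → ℂ) : Matrix S S ℂ :=
  Matrix.of fun s s' => star (l (Sum.inl s)) ⬝ᵥ r0 (Sum.inl s')

/-- The asymptotic (spectral) projector `P∞ = ∑_{s,s'} (N⁻¹)_{s s'} • r_s (l⁰_{s'})ᴴ`
onto the slow invariant subspace. -/
noncomputable def asympProj {n S F : Type*} [Fintype n] [Fintype S] [DecidableEq S]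
    (r l0 : S ⊕ F → n → ℂ) : Matrix n n ℂ :=
  ∑ s : S, ∑ s' : S,
    ((overlapN l0 r)⁻¹ s s') • vecMulVec (r (Sum.inl s)) (star (l0 (Sum.inl s')))

/-- The effective spectral gap
`δ = min_{s,f} Re(λ_s - λ_f) - max_s (-Re λ_s)`. -/
noncomputable def gapDelta {S F : Type*} [Fintype S] [Fintype F] [Nonempty S] [Nonempty F]
    (lam : S ⊕ F → ℂ) : ℝ :=
  (Finset.univ.inf' Finset.univ_nonempty
      fun p : S × F => (lam (Sum.inl p.1) - lam (Sum.inr p.2)).re)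
    - (Finset.univ.sup' Finset.univ_nonempty fun s : S => -(lam (Sum.inl s)).re)

attribute [local instance] Matrix.frobeniusNormedAlgebra

set_option maxHeartbeats 4000000

lemma frob_diag_le {m : Type*} [Fintype m] [DecidableEq m] {d : m → ℂ} {c : ℝ}
    (hc : 0 ≤ c) (h : ∀ i, ‖d i‖ ≤ c) :
    ‖Matrix.diagonal d‖ ≤ Real.sqrt (Fintype.card m) * c := by
  rw [Matrix.frobenius_norm_diagonal]
  rw [EuclideanSpace.norm_eq]
  have : ∑ i, ‖(WithLp.equiv 2 (m → ℂ)).symm d i‖ ^ 2 ≤ (Fintype.card m : ℝ) * c ^ 2 := by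
    calc ∑ i, ‖(WithLp.equiv 2 (m → ℂ)).symm d i‖ ^ 2 ≤ ∑ _i : m, c ^ 2 := by
          refine Finset.sum_le_sum fun i _ => ?_
          have := h i
          exact pow_le_pow_left₀ (norm_nonneg _) this 2
      _ = (Fintype.card m : ℝ) * c ^ 2 := by rw [Finset.sum_const, Finset.card_univ, nsmul_eq_mul]
  calc Real.sqrt (∑ i, ‖(WithLp.equiv 2 (m → ℂ)).symm d i‖ ^ 2)
      ≤ Real.sqrt ((Fintype.card m : ℝ) * c ^ 2) := Real.sqrt_le_sqrt this
    _ = Real.sqrt (Fintype.card m) * c := by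
        rw [Real.sqrt_mul (Nat.cast_nonneg _), Real.sqrt_sq hc]

lemma mul_diag_mul_apply {a b c : Type*} [Fintype b] [DecidableEq b]
    (X : Matrix a b ℂ) (d : b → ℂ) (Y : Matrix b c ℂ) (x : a) (y : c) :
    (X * Matrix.diagonal d * Y) x y = ∑ i, X x i * d i * Y i y := by
  rw [Matrix.mul_apply]
  simp_rw [Matrix.mul_diagonal]

lemma mul_diag_mul_split {a b S F : Type*} [Fintype a] [Fintype b] [Fintype S] [Fintype F]
    [DecidableEq S] [DecidableEq F]
    (X : Matrix a (S ⊕ F) ℂ) (d : S ⊕ F → ℂ) (Y : Matrix (S ⊕ F) b ℂ) :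
    X * Matrix.diagonal d * Y
      = X.submatrix id Sum.inl * Matrix.diagonal (d ∘ Sum.inl) * Y.submatrix Sum.inl id
        + X.submatrix id Sum.inr * Matrix.diagonal (d ∘ Sum.inr) * Y.submatrix Sum.inr id := by
  ext x y
  rw [Matrix.add_apply, mul_diag_mul_apply, mul_diag_mul_apply, mul_diag_mul_apply,
    Fintype.sum_sum_type]
  simp [Matrix.submatrix_apply]

lemma contOn_inv {n : Type*} [Fintype n] [DecidableEq n]
    (f : ℝ → Matrix n n ℂ) (hf : Continuous f) (s : Set ℝ)
    (hu : ∀ t ∈ s, IsUnit (f t)) : ContinuousOn (fun t => (f t)⁻¹) s := by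
  have hre : (fun t => (f t)⁻¹) = fun t => Ring.inverse (f t) := by
    funext t; exact Matrix.nonsing_inv_eq_ringInverse _
  rw [hre]
  intro t ht
  obtain ⟨u, hu'⟩ := hu t ht
  have h2 : ContinuousAt (Ring.inverse : Matrix n n ℂ → Matrix n n ℂ) (f t) :=
    hu' ▸ NormedRing.inverse_continuousAt u
  exact (h2.comp hf.continuousAt).continuousWithinAt

lemma submatrix_mul_id {a b c d : Type*} [Fintype b]
    (A : Matrix a b ℂ) (B : Matrix b c ℂ) (e : d → a) :
    (A * B).submatrix e id = A.submatrix e id * B := by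
  ext x y
  simp [Matrix.mul_apply]

lemma exp_eq_of_eigen {n ι : Type*} [Fintype n] [DecidableEq n] [Fintype ι] [DecidableEq ι]
    (L : Matrix n n ℂ) (R : Matrix n ι ℂ) (Lm : Matrix ι n ℂ) (lam : ι → ℂ)
    (h1 : L * R = R * Matrix.diagonal lam) (h2 : R * Lm = 1) (h3 : Lm * R = 1) (t : ℝ) :
    NormedSpace.exp (t • L) = R * Matrix.diagonal (fun i => Complex.exp (t * lam i)) * Lm := by
  -- cardinalities agree
  have hcard : Fintype.card n = Fintype.card ι := by
    have := Matrix.trace_mul_comm R Lm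
    rw [h2, h3, Matrix.trace_one, Matrix.trace_one] at this
    exact_mod_cast this
  let e : n ≃ ι := Fintype.equivOfCardEq hcard
  set R' : Matrix n n ℂ := R.submatrix id e with hR'
  set Lm' : Matrix n n ℂ := Lm.submatrix e id with hLm'
  have hconj : ∀ v : ι → ℂ, R' * Matrix.diagonal (v ∘ e) * Lm' = R * Matrix.diagonal v * Lm := by
    intro v
    rw [hR', hLm', ← Matrix.submatrix_diagonal_equiv]
    rw [show (Matrix.diagonal v).submatrix ⇑e ⇑e = (Matrix.diagonal v).submatrix e (e : n → ι)
      from rfl]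
    rw [Matrix.submatrix_mul_equiv R (Matrix.diagonal v) id e (e : n → ι)]
    rw [Matrix.submatrix_mul_equiv (R * Matrix.diagonal v) Lm id e id]
    rw [Matrix.submatrix_id_id]
  have hRL' : R' * Lm' = 1 := by
    rw [hR', hLm', Matrix.submatrix_mul_equiv R Lm id e id, h2, Matrix.submatrix_id_id]
  have hLR' : Lm' * R' = 1 := by
    rw [hR', hLm']
    have : Lm.submatrix (e : n → ι) (Equiv.refl n) * R.submatrix (Equiv.refl n) (e : n → ι)
        = (Lm * R).submatrix e (e : n → ι) := Matrix.submatrix_mul_equiv Lm R e (Equiv.refl n) e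
    simpa [h3, Matrix.submatrix_one_equiv] using this
  have hU : IsUnit R' := ⟨⟨R', Lm', hRL', hLR'⟩, rfl⟩
  have hinv : R'⁻¹ = Lm' := Matrix.inv_eq_right_inv hRL'
  have hLdecomp : t • L = R' * Matrix.diagonal ((fun i => (t : ℂ) * lam i) ∘ e) * Lm' := by
    rw [hconj]
    have hL : L = R * Matrix.diagonal lam * Lm := by
      calc L = L * (R * Lm) := by rw [h2, Matrix.mul_one]
        _ = R * Matrix.diagonal lam * Lm := by rw [← Matrix.mul_assoc, h1]
    rw [hL]
    rw [show (Matrix.diagonal fun i => (t : ℂ) * lam i) = (t : ℂ) • Matrix.diagonal lam by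
      rw [← Matrix.diagonal_smul]; congr 1]
    rw [Matrix.mul_smul, Matrix.smul_mul]
    ext i j
    simp [Complex.real_smul]
  rw [hLdecomp, ← hinv, Matrix.exp_conj R' _ hU, hinv]
  rw [Matrix.exp_diagonal, Pi.exp_def]
  have hfun : (fun i => NormedSpace.exp (((fun i => (t:ℂ) * lam i) ∘ ⇑e) i))
      = (fun i => Complex.exp ((t:ℂ) * lam i)) ∘ ⇑e := by
    ext i
    simp [← Complex.exp_eq_exp_ℂ]
  rw [hfun, hconj]

lemma reduce_proj {n S : Type*} [Fintype n] [DecidableEq n] [Fintype S] [DecidableEq S]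
    (X : Matrix n n ℂ) (R0S : Matrix n S ℂ) (L0S : Matrix S n ℂ) (P : Matrix n n ℂ)
    (hP : P = R0S * L0S) (h1 : L0S * R0S = 1)
    (Y : Matrix n n ℂ) (hY : Y = (1 - P) + P * X * P) (hu : IsUnit Y)
    (E : Matrix S S ℂ) (hE : E = L0S * X * R0S) :
    IsUnit E ∧ X * P * Y⁻¹ * P = X * R0S * (E⁻¹ * L0S) := by
  have h2 : P * R0S = R0S := by rw [hP, Matrix.mul_assoc, h1, Matrix.mul_one]
  have hYdet : IsUnit Y.det := (Matrix.isUnit_iff_isUnit_det _).mp hu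
  have hYR0S : Y * R0S = R0S * E := by
    rw [hY, hE, Matrix.add_mul, Matrix.sub_mul, Matrix.one_mul, h2, sub_self, zero_add,
      Matrix.mul_assoc (P * X) P R0S, h2, hP,
      Matrix.mul_assoc (R0S * L0S) X R0S, Matrix.mul_assoc R0S L0S (X * R0S),
      ← Matrix.mul_assoc L0S X R0S]
  have hEleft : (L0S * Y⁻¹ * R0S) * E = 1 := by
    calc (L0S * Y⁻¹ * R0S) * E
        = L0S * Y⁻¹ * (R0S * E) := by rw [Matrix.mul_assoc]
      _ = L0S * Y⁻¹ * (Y * R0S) := by rw [hYR0S]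
      _ = L0S * ((Y⁻¹ * Y) * R0S) := by simp only [Matrix.mul_assoc]
      _ = 1 := by rw [Matrix.nonsing_inv_mul _ hYdet, Matrix.one_mul, h1]
  have hEu : IsUnit E := ⟨⟨E, _, mul_eq_one_comm.mp hEleft, hEleft⟩, rfl⟩
  have hEdet : IsUnit E.det := (Matrix.isUnit_iff_isUnit_det _).mp hEu
  refine ⟨hEu, ?_⟩
  have hYinvR0S : Y⁻¹ * R0S = R0S * E⁻¹ := by
    calc Y⁻¹ * R0S
        = Y⁻¹ * (R0S * (E * E⁻¹)) := by
          rw [Matrix.mul_nonsing_inv _ hEdet, Matrix.mul_one]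
      _ = Y⁻¹ * ((R0S * E) * E⁻¹) := by rw [Matrix.mul_assoc]
      _ = Y⁻¹ * ((Y * R0S) * E⁻¹) := by rw [hYR0S]
      _ = (Y⁻¹ * Y) * (R0S * E⁻¹) := by simp only [Matrix.mul_assoc]
      _ = R0S * E⁻¹ := by rw [Matrix.nonsing_inv_mul _ hYdet, Matrix.one_mul]
  calc X * P * Y⁻¹ * P
      = X * R0S * ((L0S * (Y⁻¹ * R0S)) * L0S) := by
        rw [hP]
        simp only [Matrix.mul_assoc]
    _ = X * R0S * ((L0S * R0S) * (E⁻¹ * L0S)) := by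
        rw [hYinvR0S]
        simp only [Matrix.mul_assoc]
    _ = X * R0S * (E⁻¹ * L0S) := by rw [h1, Matrix.one_mul]


/-- Perturbation formula for the inverse of a sum. -/
lemma inv_perturb {S : Type*} [Fintype S] [DecidableEq S]
    (A B : Matrix S S ℂ) (hA : IsUnit A) (hE : IsUnit (A + B)) :
    (A + B)⁻¹ = A⁻¹ - (A + B)⁻¹ * B * A⁻¹ := by
  have hAd : IsUnit A.det := (Matrix.isUnit_iff_isUnit_det _).mp hA
  have hEd : IsUnit (A + B).det := (Matrix.isUnit_iff_isUnit_det _).mp hE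
  have key : (A + B)⁻¹ * (A + B) * A⁻¹ = A⁻¹ := by
    rw [Matrix.nonsing_inv_mul _ hEd, Matrix.one_mul]
  rw [Matrix.mul_add] at key
  rw [Matrix.add_mul] at key
  rw [Matrix.mul_nonsing_inv_cancel_right _ _ hAd] at key
  linear_combination (norm := module) key

/-- Norm bound for a triple product (Frobenius norm). -/
lemma norm_mul₃ {a b c d : Type*} [Fintype a] [Fintype b] [Fintype c] [Fintype d]
    (A : Matrix a b ℂ) (B : Matrix b c ℂ) (C : Matrix c d ℂ) :
    ‖A * B * C‖ ≤ ‖A‖ * ‖B‖ * ‖C‖ :=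
  le_trans (Matrix.frobenius_norm_mul _ _)
    (mul_le_mul_of_nonneg_right (Matrix.frobenius_norm_mul A B) (norm_nonneg C))

/-- Under the adiabatic-elimination eigensystem hypotheses, the time-dependent projector
converges exponentially fast to the spectral projector `P∞`:
`‖exp(t • L) * P * Π(t)⁻¹ * P - P∞‖ ≤ C * exp(-δ t)` (Frobenius norm). -/
theorem stmt_12 {n S F : Type*} [Fintype n] [DecidableEq n]
    [Fintype S] [DecidableEq S] [Nonempty S] [Fintype F] [DecidableEq F] [Nonempty F]
    (L : Matrix n n ℂ) (r l r0 l0 : S ⊕ F → n → ℂ) (lam : S ⊕ F → ℂ)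
    (heig : ∀ i, L *ᵥ r i = lam i • r i)
    (hbi : ∀ i j, star (l i) ⬝ᵥ r j = if i = j then 1 else 0)
    (hcomp : ∑ i : S ⊕ F, vecMulVec (r i) (star (l i)) = 1)
    (hbi0 : ∀ i j, star (l0 i) ⬝ᵥ r0 j = if i = j then 1 else 0)
    (hcomp0 : ∑ i : S ⊕ F, vecMulVec (r0 i) (star (l0 i)) = 1)
    (hN : IsUnit (overlapN (n := n) l0 r)) (hM : IsUnit (overlapM (n := n) l r0))
    (hRe : ∀ s : S, (lam (Sum.inl s)).re ≤ 0)
    (hgap : 0 < gapDelta (S := S) (F := F) lam)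
    (hPi : ∀ t : ℝ, 0 ≤ t →
      IsUnit ((1 - slowProj r0 l0) + slowProj r0 l0 * NormedSpace.exp (t • L) * slowProj r0 l0)) :
    ∃ C : ℝ, 0 ≤ C ∧ ∀ t : ℝ, 0 ≤ t →
      ‖NormedSpace.exp (t • L) * slowProj r0 l0 *
          ((1 - slowProj r0 l0) + slowProj r0 l0 * NormedSpace.exp (t • L) * slowProj r0 l0)⁻¹ *
          slowProj r0 l0 - asympProj r l0‖
        ≤ C * Real.exp (-(gapDelta (S := S) (F := F) lam) * t) := by
  classical
  -- ## matrices of the two eigensystems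
  set Rm : Matrix n (S ⊕ F) ℂ := Matrix.of fun x i => r i x with hRm
  set Lmm : Matrix (S ⊕ F) n ℂ := Matrix.of fun i x => star (l i x) with hLmm
  set R0m : Matrix n (S ⊕ F) ℂ := Matrix.of fun x i => r0 i x with hR0m
  set L0m : Matrix (S ⊕ F) n ℂ := Matrix.of fun i x => star (l0 i x) with hL0m
  have hLR : Lmm * Rm = 1 := by
    ext i j
    have := hbi i j
    simpa [hLmm, hRm, Matrix.mul_apply, dotProduct, Matrix.one_apply] using this
  have hRL : Rm * Lmm = 1 := by
    rw [← hcomp]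
    ext x y
    simp [hRm, hLmm, Matrix.mul_apply, Matrix.sum_apply, vecMulVec_apply]
  have hL0R0 : L0m * R0m = 1 := by
    ext i j
    have := hbi0 i j
    simpa [hL0m, hR0m, Matrix.mul_apply, dotProduct, Matrix.one_apply] using this
  have hLRdiag : L * Rm = Rm * Matrix.diagonal lam := by
    ext x i
    have := congr_fun (heig i) x
    simp only [Matrix.mulVec, dotProduct, Pi.smul_apply, smul_eq_mul] at this
    rw [Matrix.mul_diagonal, Matrix.mul_apply]
    simpa [hRm, mul_comm] using this
  have hExp : ∀ t : ℝ,
      NormedSpace.exp (t • L) = Rm * Matrix.diagonal (fun i => Complex.exp (t * lam i)) * Lmm :=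
    exp_eq_of_eigen L Rm Lmm lam hLRdiag hRL hLR
  -- ## the slow/fast blocks
  set R0S : Matrix n S ℂ := R0m.submatrix id Sum.inl with hR0S
  set L0S : Matrix S n ℂ := L0m.submatrix Sum.inl id with hL0S
  have hP : slowProj r0 l0 = R0S * L0S := by
    ext x y
    simp [slowProj, Matrix.sum_apply, vecMulVec_apply, Matrix.mul_apply, hR0S, hL0S,
      hR0m, hL0m]
  have hL0SR0S : L0S * R0S = 1 := by
    ext s s'
    have := hbi0 (Sum.inl s) (Sum.inl s')
    simpa [hL0S, hR0S, hL0m, hR0m, Matrix.mul_apply, dotProduct, Matrix.one_apply] using this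
  set RS : Matrix n S ℂ := Rm.submatrix id Sum.inl with hRS
  set RF : Matrix n F ℂ := Rm.submatrix id Sum.inr with hRF
  set V : Matrix S (S ⊕ F) ℂ := L0S * Rm with hV
  set W : Matrix (S ⊕ F) S ℂ := Lmm * R0S with hW
  set VS : Matrix S S ℂ := V.submatrix id Sum.inl with hVS
  set VF : Matrix S F ℂ := V.submatrix id Sum.inr with hVF
  set WS : Matrix S S ℂ := W.submatrix Sum.inl id with hWS
  set WF : Matrix F S ℂ := W.submatrix Sum.inr id with hWF
  have hVSN : VS = overlapN (n := n) l0 r := by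
    ext s s'
    simp [hVS, hV, overlapN, Matrix.mul_apply, dotProduct, hL0S, hL0m, hRm]
  have hWSM : WS = overlapM (n := n) l r0 := by
    ext s s'
    simp [hWS, hW, overlapM, Matrix.mul_apply, dotProduct, hLmm, hR0S, hR0m]
  have hVSu : IsUnit VS := hVSN ▸ hN
  have hWSu : IsUnit WS := hWSM ▸ hM
  have hVSd : IsUnit VS.det := (Matrix.isUnit_iff_isUnit_det _).mp hVSu
  have hWSd : IsUnit WS.det := (Matrix.isUnit_iff_isUnit_det _).mp hWSu
  -- ## asymptotic projector
  have hPinf : asympProj r l0 = RS * VS⁻¹ * L0S := by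
    rw [hVSN]
    ext x y
    rw [Matrix.mul_apply]
    simp only [asympProj, Matrix.sum_apply, Matrix.smul_apply, vecMulVec_apply,
      smul_eq_mul, Matrix.mul_apply]
    rw [Finset.sum_comm]
    refine Finset.sum_congr rfl fun s' _ => ?_
    rw [Finset.sum_mul]
    refine Finset.sum_congr rfl fun s _ => ?_
    simp only [hRS, hRm, hL0S, hL0m, Matrix.submatrix_apply, Matrix.of_apply, id_eq,
      Pi.star_apply, RCLike.star_def]
    ring
  -- ## diagonal blocks and their elementary properties
  set dgS : ℝ → Matrix S S ℂ :=
    fun t => Matrix.diagonal ((fun i => Complex.exp (t * lam i)) ∘ Sum.inl) with hdgS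
  set dgF : ℝ → Matrix F F ℂ :=
    fun t => Matrix.diagonal ((fun i => Complex.exp (t * lam i)) ∘ Sum.inr) with hdgF
  have hdgSinv : ∀ t : ℝ,
      dgS t * Matrix.diagonal (fun s => Complex.exp (-((t : ℂ) * lam (Sum.inl s)))) = 1 := by
    intro t
    rw [hdgS]
    simp only [Matrix.diagonal_mul_diagonal]
    have hfun : (fun s => ((fun i => Complex.exp ((t : ℂ) * lam i)) ∘ Sum.inl) s *
        Complex.exp (-((t : ℂ) * lam (Sum.inl s)))) = fun _ => 1 := by
      funext s
      simp [← Complex.exp_add]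
    rw [hfun, Matrix.diagonal_one]
  have hdgSinv' : ∀ t : ℝ,
      Matrix.diagonal (fun s => Complex.exp (-((t : ℂ) * lam (Sum.inl s)))) * dgS t = 1 := by
    intro t
    rw [hdgS]
    simp only [Matrix.diagonal_mul_diagonal]
    have hfun : (fun s => Complex.exp (-((t : ℂ) * lam (Sum.inl s))) *
        ((fun i => Complex.exp ((t : ℂ) * lam i)) ∘ Sum.inl) s) = fun _ => 1 := by
      funext s
      simp [← Complex.exp_add]
    rw [hfun, Matrix.diagonal_one]
  have hdgSu : ∀ t : ℝ, IsUnit (dgS t) :=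
    fun t => ⟨⟨dgS t, _, hdgSinv t, hdgSinv' t⟩, rfl⟩
  have hdgSinveq : ∀ t : ℝ,
      (dgS t)⁻¹ = Matrix.diagonal (fun s => Complex.exp (-((t : ℂ) * lam (Sum.inl s)))) :=
    fun t => Matrix.inv_eq_right_inv (hdgSinv t)
  -- ## diagonal pieces
  set dd : ℝ → (S ⊕ F) → ℂ := fun t i => Complex.exp ((t : ℂ) * lam i) with hdd
  set ddSi : ℝ → S → ℂ := fun t s => Complex.exp (-((t : ℂ) * lam (Sum.inl s))) with hddSi
  have hdgSinv : ∀ t : ℝ,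
      Matrix.diagonal (dd t ∘ Sum.inl) * Matrix.diagonal (ddSi t) = 1 := by
    intro t
    rw [Matrix.diagonal_mul_diagonal]
    have hfun : (fun s => (dd t ∘ Sum.inl) s * ddSi t s) = fun _ => 1 := by
      funext s
      simp [hdd, hddSi, ← Complex.exp_add]
    rw [hfun, Matrix.diagonal_one]
  have hdgSinv' : ∀ t : ℝ,
      Matrix.diagonal (ddSi t) * Matrix.diagonal (dd t ∘ Sum.inl) = 1 := by
    intro t
    rw [Matrix.diagonal_mul_diagonal]
    have hfun : (fun s => ddSi t s * (dd t ∘ Sum.inl) s) = fun _ => 1 := by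
      funext s
      simp [hdd, hddSi, ← Complex.exp_add]
    rw [hfun, Matrix.diagonal_one]
  have hdgSu : ∀ t : ℝ, IsUnit (Matrix.diagonal (dd t ∘ Sum.inl)) :=
    fun t => ⟨⟨_, _, hdgSinv t, hdgSinv' t⟩, rfl⟩
  have hdgSinveq : ∀ t : ℝ,
      (Matrix.diagonal (dd t ∘ Sum.inl))⁻¹ = Matrix.diagonal (ddSi t) :=
    fun t => Matrix.inv_eq_right_inv (hdgSinv t)
  -- ## splitting of the reduced evolution matrix
  have hEsplit : ∀ t : ℝ, L0S * NormedSpace.exp (t • L) * R0S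
      = VS * Matrix.diagonal (dd t ∘ Sum.inl) * WS
        + VF * Matrix.diagonal (dd t ∘ Sum.inr) * WF := by
    intro t
    have h1 : L0S * NormedSpace.exp (t • L) * R0S = V * Matrix.diagonal (dd t) * W := by
      rw [hExp t, hV, hW, hdd]
      simp only [Matrix.mul_assoc]
    rw [h1, mul_diag_mul_split, ← hVS, ← hVF, ← hWS, ← hWF]
  -- ## the reduction identity from the invertibility of Π(t)
  have hred : ∀ t : ℝ, 0 ≤ t → IsUnit (L0S * NormedSpace.exp (t • L) * R0S) ∧
      NormedSpace.exp (t • L) * slowProj r0 l0 *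
        ((1 - slowProj r0 l0) + slowProj r0 l0 * NormedSpace.exp (t • L) * slowProj r0 l0)⁻¹ *
        slowProj r0 l0
      = NormedSpace.exp (t • L) * R0S * ((L0S * NormedSpace.exp (t • L) * R0S)⁻¹ * L0S) :=
    fun t ht => reduce_proj (NormedSpace.exp (t • L)) R0S L0S _ hP hL0SR0S _ rfl (hPi t ht) _ rfl
  -- ## decomposition of the difference to the asymptotic projector
  have hdecomp : ∀ t : ℝ, 0 ≤ t →
      NormedSpace.exp (t • L) * slowProj r0 l0 *
        ((1 - slowProj r0 l0) + slowProj r0 l0 * NormedSpace.exp (t • L) * slowProj r0 l0)⁻¹ *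
        slowProj r0 l0 - asympProj r l0
      = RS * ((Matrix.diagonal (dd t ∘ Sum.inl) * WS * (L0S * NormedSpace.exp (t • L) * R0S)⁻¹ - VS⁻¹)
            * L0S)
        + RF * ((Matrix.diagonal (dd t ∘ Sum.inr) * WF * (L0S * NormedSpace.exp (t • L) * R0S)⁻¹)
            * L0S) := by
    intro t ht
    rw [(hred t ht).2, hPinf]
    set Ein : Matrix S S ℂ := (L0S * NormedSpace.exp (t • L) * R0S)⁻¹ with hEin
    have h1 : NormedSpace.exp (t • L) * R0S * (Ein * L0S)
        = Rm * Matrix.diagonal (dd t) * (W * (Ein * L0S)) := by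
      rw [hExp t, hW, hdd]
      simp only [Matrix.mul_assoc]
    rw [h1, mul_diag_mul_split Rm (dd t) (W * (Ein * L0S)),
      submatrix_mul_id W (Ein * L0S) Sum.inl, submatrix_mul_id W (Ein * L0S) Sum.inr,
      ← hRS, ← hRF, ← hWS, ← hWF]
    simp only [Matrix.mul_sub, Matrix.sub_mul, Matrix.mul_assoc]
    abel
  -- ## scalar gap quantities
  set δe : ℝ := gapDelta (S := S) (F := F) lam with hδe
  set μ : ℝ := Finset.univ.sup' Finset.univ_nonempty (fun s : S => -(lam (Sum.inl s)).re)
    with hμ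
  have hδpos : 0 < δe := hgap
  have hμ0 : 0 ≤ μ := by
    have s0 : S := Classical.arbitrary S
    have h1 : -(lam (Sum.inl s0)).re ≤ μ :=
      Finset.le_sup' (fun s : S => -(lam (Sum.inl s)).re) (Finset.mem_univ s0)
    have := hRe s0
    linarith
  have hδμ : 0 < δe + μ := by linarith
  have hμle : ∀ s : S, -(lam (Sum.inl s)).re ≤ μ :=
    fun s => Finset.le_sup' (fun s : S => -(lam (Sum.inl s)).re) (Finset.mem_univ s)
  have hfast : ∀ f : F, (lam (Sum.inr f)).re ≤ -(δe + 2 * μ) := by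
    intro f
    obtain ⟨s₁, -, hs₁⟩ := Finset.exists_mem_eq_sup' (Finset.univ_nonempty (α := S))
      (fun s : S => -(lam (Sum.inl s)).re)
    have h1 : δe + μ ≤ (lam (Sum.inl s₁) - lam (Sum.inr f)).re := by
      have h2 := Finset.inf'_le (fun p : S × F => (lam (Sum.inl p.1) - lam (Sum.inr p.2)).re)
        (Finset.mem_univ (s₁, f))
      have h3 : δe = (Finset.univ.inf' Finset.univ_nonempty
          (fun p : S × F => (lam (Sum.inl p.1) - lam (Sum.inr p.2)).re)) - μ := by
        rw [hδe, hμ]; rfl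
      linarith
    have h2 : (lam (Sum.inl s₁)).re = -μ := by rw [hμ, hs₁]; ring
    rw [Complex.sub_re] at h1
    linarith
  -- ## norms of the diagonal blocks
  have hnexp : ∀ z : ℂ, ‖Complex.exp z‖ = Real.exp z.re := by
    intro z
    rw [Complex.norm_exp]
  have hre : ∀ (t : ℝ) (z : ℂ), ((t : ℂ) * z).re = t * z.re := by
    intro t z
    simp [Complex.mul_re]
  have hdgSb : ∀ t : ℝ, 0 ≤ t →
      ‖Matrix.diagonal (dd t ∘ Sum.inl)‖ ≤ Real.sqrt (Fintype.card S) := by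
    intro t ht
    have := frob_diag_le (m := S) (d := dd t ∘ Sum.inl) (c := 1) zero_le_one ?_
    · simpa using this
    intro s
    rw [Function.comp_apply, hdd]
    simp only
    rw [hnexp, hre]
    have h1 : t * (lam (Sum.inl s)).re ≤ 0 :=
      mul_nonpos_iff.mpr (Or.inl ⟨ht, hRe s⟩)
    calc Real.exp (t * (lam (Sum.inl s)).re) ≤ Real.exp 0 := Real.exp_le_exp.mpr h1
      _ = 1 := Real.exp_zero
  have hdgSib : ∀ t : ℝ, 0 ≤ t →
      ‖(Matrix.diagonal (dd t ∘ Sum.inl))⁻¹‖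
        ≤ Real.sqrt (Fintype.card S) * Real.exp (μ * t) := by
    intro t ht
    rw [hdgSinveq t]
    refine frob_diag_le (Real.exp_pos _).le ?_
    intro s
    rw [hddSi]
    simp only
    rw [hnexp, Complex.neg_re, hre]
    refine Real.exp_le_exp.mpr ?_
    have h1 := mul_le_mul_of_nonneg_left (hμle s) ht
    linarith [h1]
  have hdgFb : ∀ t : ℝ, 0 ≤ t →
      ‖Matrix.diagonal (dd t ∘ Sum.inr)‖
        ≤ Real.sqrt (Fintype.card F) * Real.exp (-(δe + 2 * μ) * t) := by
    intro t ht
    refine frob_diag_le (Real.exp_pos _).le ?_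
    intro f
    rw [Function.comp_apply, hdd]
    simp only
    rw [hnexp, hre]
    refine Real.exp_le_exp.mpr ?_
    have h1 := mul_le_mul_of_nonneg_left (hfast f) ht
    linarith [h1]
  -- ## inverse of the slow block product
  have hAu : ∀ t : ℝ, IsUnit (VS * Matrix.diagonal (dd t ∘ Sum.inl) * WS) :=
    fun t => (hVSu.mul (hdgSu t)).mul hWSu
  have hAinv : ∀ t : ℝ, (VS * Matrix.diagonal (dd t ∘ Sum.inl) * WS)⁻¹
      = WS⁻¹ * ((Matrix.diagonal (dd t ∘ Sum.inl))⁻¹ * VS⁻¹) := by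
    intro t
    rw [Matrix.mul_inv_rev, Matrix.mul_inv_rev]
  set cA : ℝ := ‖WS⁻¹‖ * Real.sqrt (Fintype.card S) * ‖VS⁻¹‖ with hcA
  have hcA0 : 0 ≤ cA := by rw [hcA]; positivity
  have hAinvb : ∀ t : ℝ, 0 ≤ t →
      ‖(VS * Matrix.diagonal (dd t ∘ Sum.inl) * WS)⁻¹‖ ≤ cA * Real.exp (μ * t) := by
    intro t ht
    rw [hAinv t]
    calc ‖WS⁻¹ * ((Matrix.diagonal (dd t ∘ Sum.inl))⁻¹ * VS⁻¹)‖
        ≤ ‖WS⁻¹‖ * (‖(Matrix.diagonal (dd t ∘ Sum.inl))⁻¹‖ * ‖VS⁻¹‖) :=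
          le_trans (Matrix.frobenius_norm_mul _ _)
            (mul_le_mul_of_nonneg_left (Matrix.frobenius_norm_mul _ _) (norm_nonneg _))
      _ ≤ ‖WS⁻¹‖ * ((Real.sqrt (Fintype.card S) * Real.exp (μ * t)) * ‖VS⁻¹‖) := by
          have := hdgSib t ht
          gcongr
      _ = cA * Real.exp (μ * t) := by rw [hcA]; ring
  set cB : ℝ := ‖VF‖ * Real.sqrt (Fintype.card F) * ‖WF‖ with hcB
  have hcB0 : 0 ≤ cB := by rw [hcB]; positivity
  have hBb : ∀ t : ℝ, 0 ≤ t →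
      ‖VF * Matrix.diagonal (dd t ∘ Sum.inr) * WF‖
        ≤ cB * Real.exp (-(δe + 2 * μ) * t) := by
    intro t ht
    calc ‖VF * Matrix.diagonal (dd t ∘ Sum.inr) * WF‖
        ≤ ‖VF‖ * ‖Matrix.diagonal (dd t ∘ Sum.inr)‖ * ‖WF‖ := norm_mul₃ _ _ _
      _ ≤ ‖VF‖ * (Real.sqrt (Fintype.card F) * Real.exp (-(δe + 2 * μ) * t)) * ‖WF‖ := by
          have := hdgFb t ht
          gcongr
      _ = cB * Real.exp (-(δe + 2 * μ) * t) := by rw [hcB]; ring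
  -- ## key algebraic identity for the slow-block error
  have hDSWSA : ∀ t : ℝ,
      Matrix.diagonal (dd t ∘ Sum.inl) * WS
        * (VS * Matrix.diagonal (dd t ∘ Sum.inl) * WS)⁻¹ = VS⁻¹ := by
    intro t
    rw [hAinv t, hdgSinveq t]
    calc Matrix.diagonal (dd t ∘ Sum.inl) * WS * (WS⁻¹ * (Matrix.diagonal (ddSi t) * VS⁻¹))
        = Matrix.diagonal (dd t ∘ Sum.inl) * (WS * WS⁻¹)
            * (Matrix.diagonal (ddSi t) * VS⁻¹) := by
          simp only [Matrix.mul_assoc]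
      _ = Matrix.diagonal (dd t ∘ Sum.inl) * Matrix.diagonal (ddSi t) * VS⁻¹ := by
          rw [Matrix.mul_nonsing_inv _ hWSd, Matrix.mul_one, Matrix.mul_assoc]
      _ = VS⁻¹ := by rw [hdgSinv t, Matrix.one_mul]
  have hkeyid : ∀ t : ℝ, 0 ≤ t →
      Matrix.diagonal (dd t ∘ Sum.inl) * WS * (L0S * NormedSpace.exp (t • L) * R0S)⁻¹ - VS⁻¹
      = -(Matrix.diagonal (dd t ∘ Sum.inl) * WS * (L0S * NormedSpace.exp (t • L) * R0S)⁻¹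
          * (VF * Matrix.diagonal (dd t ∘ Sum.inr) * WF)
          * (VS * Matrix.diagonal (dd t ∘ Sum.inl) * WS)⁻¹) := by
    intro t ht
    have hEu : IsUnit (L0S * NormedSpace.exp (t • L) * R0S) := (hred t ht).1
    have e1 : (L0S * NormedSpace.exp (t • L) * R0S)⁻¹
        = (VS * Matrix.diagonal (dd t ∘ Sum.inl) * WS)⁻¹
          - (L0S * NormedSpace.exp (t • L) * R0S)⁻¹ * (VF * Matrix.diagonal (dd t ∘ Sum.inr) * WF)
            * (VS * Matrix.diagonal (dd t ∘ Sum.inl) * WS)⁻¹ := by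
      have := inv_perturb (VS * Matrix.diagonal (dd t ∘ Sum.inl) * WS)
        (VF * Matrix.diagonal (dd t ∘ Sum.inr) * WF) (hAu t) (by rw [← hEsplit t]; exact hEu)
      rw [← hEsplit t] at this
      exact this
    calc Matrix.diagonal (dd t ∘ Sum.inl) * WS * (L0S * NormedSpace.exp (t • L) * R0S)⁻¹ - VS⁻¹
        = Matrix.diagonal (dd t ∘ Sum.inl) * WS
            * ((VS * Matrix.diagonal (dd t ∘ Sum.inl) * WS)⁻¹
              - (L0S * NormedSpace.exp (t • L) * R0S)⁻¹
                * (VF * Matrix.diagonal (dd t ∘ Sum.inr) * WF)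
                * (VS * Matrix.diagonal (dd t ∘ Sum.inl) * WS)⁻¹) - VS⁻¹ := by
          rw [← e1]
      _ = Matrix.diagonal (dd t ∘ Sum.inl) * WS
            * (VS * Matrix.diagonal (dd t ∘ Sum.inl) * WS)⁻¹
          - Matrix.diagonal (dd t ∘ Sum.inl) * WS
            * ((L0S * NormedSpace.exp (t • L) * R0S)⁻¹
              * (VF * Matrix.diagonal (dd t ∘ Sum.inr) * WF)
              * (VS * Matrix.diagonal (dd t ∘ Sum.inl) * WS)⁻¹) - VS⁻¹ := by
          rw [Matrix.mul_sub]
      _ = -(Matrix.diagonal (dd t ∘ Sum.inl) * WS * (L0S * NormedSpace.exp (t • L) * R0S)⁻¹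
          * (VF * Matrix.diagonal (dd t ∘ Sum.inr) * WF)
          * (VS * Matrix.diagonal (dd t ∘ Sum.inl) * WS)⁻¹) := by
          rw [hDSWSA t]
          simp only [Matrix.mul_assoc]
          abel
  -- ## threshold time and smallness of the fast correction
  set t0 : ℝ := max 0 (Real.log (2 * (cB * cA) + 1) / (δe + μ)) with ht0def
  have ht00 : 0 ≤ t0 := le_max_left _ _
  have hK0 : 0 ≤ cB * cA := mul_nonneg hcB0 hcA0
  have hsmall : ∀ t : ℝ, t0 ≤ t → cB * cA * Real.exp (-(δe + μ) * t) ≤ 1 / 2 := by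
    intro t ht
    have h1 : Real.log (2 * (cB * cA) + 1) / (δe + μ) ≤ t :=
      le_trans (le_max_right _ _) (le_trans (le_of_eq ht0def.symm) ht)
    have h2 : Real.log (2 * (cB * cA) + 1) ≤ (δe + μ) * t := by
      rw [div_le_iff₀ hδμ] at h1
      linarith
    have hpos : (0 : ℝ) < 2 * (cB * cA) + 1 := by linarith
    have h3 : 2 * (cB * cA) + 1 ≤ Real.exp ((δe + μ) * t) := by
      rw [← Real.exp_log hpos]
      exact Real.exp_le_exp.mpr h2
    have h4 : Real.exp (-(δe + μ) * t) ≤ (2 * (cB * cA) + 1)⁻¹ := by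
      rw [show -(δe + μ) * t = -((δe + μ) * t) by ring, Real.exp_neg]
      exact inv_anti₀ hpos h3
    have h5 : cB * cA * Real.exp (-(δe + μ) * t) ≤ cB * cA * (2 * (cB * cA) + 1)⁻¹ :=
      mul_le_mul_of_nonneg_left h4 hK0
    have h6 : (2 * (cB * cA) + 1) * (2 * (cB * cA) + 1)⁻¹ = 1 := mul_inv_cancel₀ (by linarith)
    have h7 : (0 : ℝ) ≤ (2 * (cB * cA) + 1)⁻¹ := inv_nonneg.mpr (by linarith)
    nlinarith [h5, h6, h7]
  have hexpprod : ∀ t : ℝ, Real.exp (-(δe + 2 * μ) * t) * Real.exp (μ * t)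
      = Real.exp (-(δe + μ) * t) := by
    intro t
    rw [← Real.exp_add]
    congr 1
    ring
  -- ## bound on the inverse of the reduced evolution for large times
  have hEinvb : ∀ t : ℝ, t0 ≤ t →
      ‖(L0S * NormedSpace.exp (t • L) * R0S)⁻¹‖ ≤ 2 * cA * Real.exp (μ * t) := by
    intro t ht
    have ht' : 0 ≤ t := le_trans ht00 ht
    have hEu : IsUnit (L0S * NormedSpace.exp (t • L) * R0S) := (hred t ht').1
    have e1 : (L0S * NormedSpace.exp (t • L) * R0S)⁻¹
        = (VS * Matrix.diagonal (dd t ∘ Sum.inl) * WS)⁻¹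
          - (L0S * NormedSpace.exp (t • L) * R0S)⁻¹ * (VF * Matrix.diagonal (dd t ∘ Sum.inr) * WF)
            * (VS * Matrix.diagonal (dd t ∘ Sum.inl) * WS)⁻¹ := by
      have h := inv_perturb (VS * Matrix.diagonal (dd t ∘ Sum.inl) * WS)
        (VF * Matrix.diagonal (dd t ∘ Sum.inr) * WF) (hAu t) (by rw [← hEsplit t]; exact hEu)
      rw [← hEsplit t] at h
      exact h
    have hBA : ‖VF * Matrix.diagonal (dd t ∘ Sum.inr) * WF‖
        * ‖(VS * Matrix.diagonal (dd t ∘ Sum.inl) * WS)⁻¹‖ ≤ 1 / 2 := by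
      calc ‖VF * Matrix.diagonal (dd t ∘ Sum.inr) * WF‖
          * ‖(VS * Matrix.diagonal (dd t ∘ Sum.inl) * WS)⁻¹‖
          ≤ (cB * Real.exp (-(δe + 2 * μ) * t)) * (cA * Real.exp (μ * t)) :=
            mul_le_mul (hBb t ht') (hAinvb t ht') (norm_nonneg _)
              (by positivity)
        _ = cB * cA * (Real.exp (-(δe + 2 * μ) * t) * Real.exp (μ * t)) := by ring
        _ = cB * cA * Real.exp (-(δe + μ) * t) := by rw [hexpprod t]
        _ ≤ 1 / 2 := hsmall t ht
    have h2 : ‖(L0S * NormedSpace.exp (t • L) * R0S)⁻¹‖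
        ≤ ‖(VS * Matrix.diagonal (dd t ∘ Sum.inl) * WS)⁻¹‖
          + ‖(L0S * NormedSpace.exp (t • L) * R0S)⁻¹‖
            * (‖VF * Matrix.diagonal (dd t ∘ Sum.inr) * WF‖
              * ‖(VS * Matrix.diagonal (dd t ∘ Sum.inl) * WS)⁻¹‖) := by
      calc ‖(L0S * NormedSpace.exp (t • L) * R0S)⁻¹‖
          = ‖(VS * Matrix.diagonal (dd t ∘ Sum.inl) * WS)⁻¹
            - (L0S * NormedSpace.exp (t • L) * R0S)⁻¹ * (VF * Matrix.diagonal (dd t ∘ Sum.inr) * WF)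
              * (VS * Matrix.diagonal (dd t ∘ Sum.inl) * WS)⁻¹‖ := by rw [← e1]
        _ ≤ ‖(VS * Matrix.diagonal (dd t ∘ Sum.inl) * WS)⁻¹‖
            + ‖(L0S * NormedSpace.exp (t • L) * R0S)⁻¹ * (VF * Matrix.diagonal (dd t ∘ Sum.inr) * WF)
              * (VS * Matrix.diagonal (dd t ∘ Sum.inl) * WS)⁻¹‖ := norm_sub_le _ _
        _ ≤ _ := by
            have h3 := norm_mul₃ ((L0S * NormedSpace.exp (t • L) * R0S)⁻¹)
              (VF * Matrix.diagonal (dd t ∘ Sum.inr) * WF)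
              ((VS * Matrix.diagonal (dd t ∘ Sum.inl) * WS)⁻¹)
            have h4 : ‖(L0S * NormedSpace.exp (t • L) * R0S)⁻¹‖
                * ‖VF * Matrix.diagonal (dd t ∘ Sum.inr) * WF‖
                * ‖(VS * Matrix.diagonal (dd t ∘ Sum.inl) * WS)⁻¹‖
                = ‖(L0S * NormedSpace.exp (t • L) * R0S)⁻¹‖
                  * (‖VF * Matrix.diagonal (dd t ∘ Sum.inr) * WF‖
                    * ‖(VS * Matrix.diagonal (dd t ∘ Sum.inl) * WS)⁻¹‖) := by ring
            linarith [h3, h4.le]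
    have h5 : ‖(L0S * NormedSpace.exp (t • L) * R0S)⁻¹‖
          * (‖VF * Matrix.diagonal (dd t ∘ Sum.inr) * WF‖
            * ‖(VS * Matrix.diagonal (dd t ∘ Sum.inl) * WS)⁻¹‖)
        ≤ ‖(L0S * NormedSpace.exp (t • L) * R0S)⁻¹‖ * (1 / 2) :=
      mul_le_mul_of_nonneg_left hBA (norm_nonneg _)
    have h6 := hAinvb t ht'
    linarith
  -- ## the exponential bound for large times
  set C1 : ℝ := ‖RS‖ * (Real.sqrt (Fintype.card S) * ‖WS‖ * (2 * cA) * cB * cA) * ‖L0S‖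
    with hC1
  set C2 : ℝ := ‖RF‖ * (Real.sqrt (Fintype.card F) * ‖WF‖ * (2 * cA)) * ‖L0S‖ with hC2
  have hC10 : 0 ≤ C1 := by
    rw [hC1]
    have : (0:ℝ) ≤ Real.sqrt (Fintype.card S) * ‖WS‖ * (2 * cA) * cB * cA :=
      mul_nonneg (mul_nonneg (mul_nonneg (mul_nonneg (Real.sqrt_nonneg _) (norm_nonneg _))
        (by linarith)) hcB0) hcA0
    exact mul_nonneg (mul_nonneg (norm_nonneg _) this) (norm_nonneg _)
  have hC20 : 0 ≤ C2 := by
    rw [hC2]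
    have : (0:ℝ) ≤ Real.sqrt (Fintype.card F) * ‖WF‖ * (2 * cA) :=
      mul_nonneg (mul_nonneg (Real.sqrt_nonneg _) (norm_nonneg _)) (by linarith)
    exact mul_nonneg (mul_nonneg (norm_nonneg _) this) (norm_nonneg _)
  have hlarge : ∀ t : ℝ, t0 ≤ t →
      ‖NormedSpace.exp (t • L) * slowProj r0 l0 *
          ((1 - slowProj r0 l0) + slowProj r0 l0 * NormedSpace.exp (t • L) * slowProj r0 l0)⁻¹ *
          slowProj r0 l0 - asympProj r l0‖
        ≤ (C1 + C2) * Real.exp (-δe * t) := by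
    intro t ht
    have ht' : 0 ≤ t := le_trans ht00 ht
    rw [hdecomp t ht']
    refine le_trans (norm_add_le _ _) ?_
    -- first summand
    have b1 : ‖Matrix.diagonal (dd t ∘ Sum.inl) * WS * (L0S * NormedSpace.exp (t • L) * R0S)⁻¹‖
        ≤ Real.sqrt (Fintype.card S) * ‖WS‖ * (2 * cA * Real.exp (μ * t)) := by
      refine le_trans (norm_mul₃ _ _ _) ?_
      have g1 := hdgSb t ht'
      have g2 := hEinvb t ht
      gcongr
    have b2 : ‖Matrix.diagonal (dd t ∘ Sum.inl) * WS * (L0S * NormedSpace.exp (t • L) * R0S)⁻¹ - VS⁻¹‖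
        ≤ Real.sqrt (Fintype.card S) * ‖WS‖ * (2 * cA * Real.exp (μ * t))
          * (cB * Real.exp (-(δe + 2 * μ) * t)) * (cA * Real.exp (μ * t)) := by
      rw [hkeyid t ht', norm_neg]
      refine le_trans (norm_mul₃ _ _ _) ?_
      have g1 := hBb t ht'
      have g2 := hAinvb t ht'
      gcongr
    have b3 : ‖RS * ((Matrix.diagonal (dd t ∘ Sum.inl) * WS * (L0S * NormedSpace.exp (t • L) * R0S)⁻¹
          - VS⁻¹) * L0S)‖
        ≤ ‖RS‖ * (Real.sqrt (Fintype.card S) * ‖WS‖ * (2 * cA * Real.exp (μ * t))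
          * (cB * Real.exp (-(δe + 2 * μ) * t)) * (cA * Real.exp (μ * t)) * ‖L0S‖) := by
      refine le_trans (Matrix.frobenius_norm_mul _ _) ?_
      refine mul_le_mul_of_nonneg_left ?_ (norm_nonneg _)
      refine le_trans (Matrix.frobenius_norm_mul _ _) ?_
      gcongr
    -- second summand
    have b4 : ‖Matrix.diagonal (dd t ∘ Sum.inr) * WF * (L0S * NormedSpace.exp (t • L) * R0S)⁻¹‖
        ≤ Real.sqrt (Fintype.card F) * Real.exp (-(δe + 2 * μ) * t) * ‖WF‖
          * (2 * cA * Real.exp (μ * t)) := by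
      refine le_trans (norm_mul₃ _ _ _) ?_
      have g1 := hdgFb t ht'
      have g2 := hEinvb t ht
      gcongr
    have b5 : ‖RF * ((Matrix.diagonal (dd t ∘ Sum.inr) * WF
          * (L0S * NormedSpace.exp (t • L) * R0S)⁻¹) * L0S)‖
        ≤ ‖RF‖ * (Real.sqrt (Fintype.card F) * Real.exp (-(δe + 2 * μ) * t) * ‖WF‖
          * (2 * cA * Real.exp (μ * t)) * ‖L0S‖) := by
      refine le_trans (Matrix.frobenius_norm_mul _ _) ?_
      refine mul_le_mul_of_nonneg_left ?_ (norm_nonneg _)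
      refine le_trans (Matrix.frobenius_norm_mul _ _) ?_
      gcongr
    -- collapse the exponentials
    have hex1 : Real.exp (μ * t) * Real.exp (-(δe + 2 * μ) * t) * Real.exp (μ * t)
        = Real.exp (-δe * t) := by
      rw [← Real.exp_add, ← Real.exp_add]
      congr 1
      ring
    have heq1 : ‖RS‖ * (Real.sqrt (Fintype.card S) * ‖WS‖ * (2 * cA * Real.exp (μ * t))
          * (cB * Real.exp (-(δe + 2 * μ) * t)) * (cA * Real.exp (μ * t)) * ‖L0S‖)
        = C1 * (Real.exp (μ * t) * Real.exp (-(δe + 2 * μ) * t) * Real.exp (μ * t)) := by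
      rw [hC1]
      ring
    have heq2 : ‖RF‖ * (Real.sqrt (Fintype.card F) * Real.exp (-(δe + 2 * μ) * t) * ‖WF‖
          * (2 * cA * Real.exp (μ * t)) * ‖L0S‖)
        = C2 * (Real.exp (-(δe + 2 * μ) * t) * Real.exp (μ * t)) := by
      rw [hC2]
      ring
    have hmono : Real.exp (-(δe + μ) * t) ≤ Real.exp (-δe * t) := by
      refine Real.exp_le_exp.mpr ?_
      have := mul_nonneg hμ0 ht'
      linarith
    calc ‖RS * ((Matrix.diagonal (dd t ∘ Sum.inl) * WS * (L0S * NormedSpace.exp (t • L) * R0S)⁻¹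
          - VS⁻¹) * L0S)‖
        + ‖RF * ((Matrix.diagonal (dd t ∘ Sum.inr) * WF
          * (L0S * NormedSpace.exp (t • L) * R0S)⁻¹) * L0S)‖
        ≤ C1 * (Real.exp (μ * t) * Real.exp (-(δe + 2 * μ) * t) * Real.exp (μ * t))
          + C2 * (Real.exp (-(δe + 2 * μ) * t) * Real.exp (μ * t)) := by
          rw [← heq1, ← heq2]
          exact add_le_add b3 b5
      _ = C1 * Real.exp (-δe * t) + C2 * Real.exp (-(δe + μ) * t) := by
          rw [hex1, hexpprod t]
      _ ≤ C1 * Real.exp (-δe * t) + C2 * Real.exp (-δe * t) := by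
          have := mul_le_mul_of_nonneg_left hmono hC20
          linarith
      _ = (C1 + C2) * Real.exp (-δe * t) := by ring
  -- ## compactness bound for small times
  have hcont : ContinuousOn (fun u : ℝ =>
      NormedSpace.exp (u • L) * slowProj r0 l0 *
        ((1 - slowProj r0 l0) + slowProj r0 l0 * NormedSpace.exp (u • L) * slowProj r0 l0)⁻¹ *
        slowProj r0 l0 - asympProj r l0) (Set.Icc 0 t0) := by
    have c1 : Continuous fun u : ℝ => NormedSpace.exp (u • L) :=
      (NormedSpace.exp_continuous (𝔸 := Matrix n n ℂ)).comp (continuous_id.smul continuous_const)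
    have c2 : Continuous fun u : ℝ =>
        (1 - slowProj r0 l0) + slowProj r0 l0 * NormedSpace.exp (u • L) * slowProj r0 l0 :=
      continuous_const.add ((continuous_const.mul c1).mul continuous_const)
    have c3 : ContinuousOn (fun u : ℝ =>
        ((1 - slowProj r0 l0) + slowProj r0 l0 * NormedSpace.exp (u • L) * slowProj r0 l0)⁻¹)
        (Set.Icc 0 t0) := by
      exact contOn_inv _ c2 _ (fun u hu => hPi u hu.1)
    exact (((c1.continuousOn.mul continuousOn_const).mul c3).mul
      continuousOn_const).sub continuousOn_const
  obtain ⟨C0, hC0⟩ := (isCompact_Icc (a := (0:ℝ)) (b := t0)).exists_bound_of_continuousOn hcont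
  -- ## conclusion
  refine ⟨max C0 0 * Real.exp (δe * t0) + (C1 + C2), ?_, ?_⟩
  · have h1 : (0:ℝ) ≤ max C0 0 * Real.exp (δe * t0) :=
      mul_nonneg (le_max_right _ _) (Real.exp_pos _).le
    linarith
  · intro t ht
    rcases le_total t t0 with hcase | hcase
    · have h1 := hC0 t ⟨ht, hcase⟩
      have h2 : (1 : ℝ) ≤ Real.exp (δe * t0) * Real.exp (-δe * t) := by
        rw [← Real.exp_add, ← Real.exp_zero]
        refine Real.exp_le_exp.mpr ?_
        have h3 : 0 ≤ δe * (t0 - t) := mul_nonneg hδpos.le (sub_nonneg.mpr hcase)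
        linarith [mul_sub δe t0 t]
      have h4 : C0 ≤ max C0 0 * (Real.exp (δe * t0) * Real.exp (-δe * t)) :=
        le_trans (le_max_left _ _) (le_mul_of_one_le_right (le_max_right _ _) h2)
      have h5 : 0 ≤ (C1 + C2) * Real.exp (-δe * t) :=
        mul_nonneg (by linarith) (Real.exp_pos _).le
      calc ‖NormedSpace.exp (t • L) * slowProj r0 l0 *
          ((1 - slowProj r0 l0) + slowProj r0 l0 * NormedSpace.exp (t • L) * slowProj r0 l0)⁻¹ *
          slowProj r0 l0 - asympProj r l0‖ ≤ C0 := h1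
        _ ≤ max C0 0 * (Real.exp (δe * t0) * Real.exp (-δe * t)) := h4
        _ ≤ (max C0 0 * Real.exp (δe * t0) + (C1 + C2)) * Real.exp (-δe * t) := by
            have expand : (max C0 0 * Real.exp (δe * t0) + (C1 + C2)) * Real.exp (-δe * t)
                = max C0 0 * (Real.exp (δe * t0) * Real.exp (-δe * t))
                  + (C1 + C2) * Real.exp (-δe * t) := by ring
            rw [expand]
            linarith
    · have h1 := hlarge t hcase
      have h2 : (0:ℝ) ≤ max C0 0 * Real.exp (δe * t0) * Real.exp (-δe * t) :=
        mul_nonneg (mul_nonneg (le_max_right _ _) (Real.exp_pos _).le) (Real.exp_pos _).le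
      calc ‖NormedSpace.exp (t • L) * slowProj r0 l0 *
          ((1 - slowProj r0 l0) + slowProj r0 l0 * NormedSpace.exp (t • L) * slowProj r0 l0)⁻¹ *
          slowProj r0 l0 - asympProj r l0‖ ≤ (C1 + C2) * Real.exp (-δe * t) := h1
        _ ≤ (max C0 0 * Real.exp (δe * t0) + (C1 + C2)) * Real.exp (-δe * t) := by
            have expand : (max C0 0 * Real.exp (δe * t0) + (C1 + C2)) * Real.exp (-δe * t)
                = max C0 0 * Real.exp (δe * t0) * Real.exp (-δe * t)
                  + (C1 + C2) * Real.exp (-δe * t) := by ring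
            rw [expand]
            linarith
end

section
/- Under the adiabatic-elimination eigensystem hypotheses (stated in the context), the initial-condition term of the time-convolutionless master equation decays exponentially: there exists a constant C ≥ 0 such that for all real t ≥ 0, ‖(1 − exp(t • L) * P * (Π(t))⁻¹ * P) * exp(t • L) * Q‖ ≤ C * exp(−δ * t), where ‖·‖ is the Frobenius norm on matrices. -/
open Matrix NormedSpace

attribute [local instance] Matrix.frobeniusNormedAddCommGroup Matrix.frobeniusNormedSpace
  Matrix.frobeniusNormedRing

attribute [local instance] Matrix.frobeniusNormedAlgebra

lemma frob_norm_le_sum {m p : Type*} [Fintype m] [Fintype p] (C : Matrix m p ℂ) :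
    ‖C‖ ≤ ∑ i, ∑ j, ‖C i j‖ := by
  have h0 : (0:ℝ) ≤ ∑ i, ∑ j, ‖C i j‖ := by positivity
  rw [Matrix.frobenius_norm_def]
  have h1 : (∑ i, ∑ j, ‖C i j‖ ^ (2:ℝ)) ≤ (∑ i, ∑ j, ‖C i j‖) ^ (2:ℝ) := by
    rw [Real.rpow_two]
    simp_rw [Real.rpow_two]
    calc ∑ i, ∑ j, ‖C i j‖ ^ 2 ≤ ∑ i, (∑ j, ‖C i j‖) ^ 2 := by
          refine Finset.sum_le_sum fun i _ => ?_
          exact Finset.sum_sq_le_sq_sum_of_nonneg fun j _ => norm_nonneg _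
      _ ≤ (∑ i, ∑ j, ‖C i j‖) ^ 2 :=
          Finset.sum_sq_le_sq_sum_of_nonneg fun i _ => by positivity
  calc (∑ i, ∑ j, ‖C i j‖ ^ (2:ℝ)) ^ (1/2:ℝ)
      ≤ ((∑ i, ∑ j, ‖C i j‖) ^ (2:ℝ)) ^ (1/2:ℝ) := by
        apply Real.rpow_le_rpow (by positivity) h1 (by norm_num)
    _ = ∑ i, ∑ j, ‖C i j‖ := by
        rw [← Real.rpow_mul h0]
        norm_num

lemma norm_diagonal_le_sum {m : Type*} [Fintype m] [DecidableEq m] (v : m → ℂ) :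
    ‖(Matrix.diagonal v : Matrix m m ℂ)‖ ≤ ∑ i, ‖v i‖ := by
  refine (frob_norm_le_sum _).trans_eq ?_
  refine Finset.sum_congr rfl fun i _ => ?_
  simp [Matrix.diagonal_apply, apply_ite norm]

lemma norm_dcd_le {F S : Type*} [Fintype F] [Fintype S] [DecidableEq F] [DecidableEq S]
    (df : F → ℂ) (ds : S → ℂ) (C : Matrix F S ℂ) (e : ℝ)
    (h : ∀ f s, ‖df f‖ * ‖ds s‖ ≤ e) :
    ‖Matrix.diagonal df * C * Matrix.diagonal ds‖ ≤ e * ∑ f, ∑ s, ‖C f s‖ := by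
  refine (frob_norm_le_sum _).trans ?_
  rw [Finset.mul_sum]
  refine Finset.sum_le_sum fun f _ => ?_
  rw [Finset.mul_sum]
  refine Finset.sum_le_sum fun s _ => ?_
  have he : (Matrix.diagonal df * C * Matrix.diagonal ds) f s = df f * C f s * ds s := by
    rw [Matrix.mul_diagonal, Matrix.diagonal_mul]
  rw [he]
  calc ‖df f * C f s * ds s‖ = (‖df f‖ * ‖ds s‖) * ‖C f s‖ := by
        rw [norm_mul, norm_mul]; ring
    _ ≤ e * ‖C f s‖ := mul_le_mul_of_nonneg_right (h f s) (norm_nonneg _)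

lemma split_ADB {n S F : Type*} [Fintype n] [Fintype S] [Fintype F] [DecidableEq S]
    [DecidableEq F] (a b : S ⊕ F → n → ℂ) (w : S ⊕ F → ℂ) :
    (Matrix.of fun x i => a i x) * Matrix.diagonal w * (Matrix.of fun i x => b i x)
      = (Matrix.of fun x s => a (Sum.inl s) x) * Matrix.diagonal (fun s => w (Sum.inl s)) *
          (Matrix.of fun s x => b (Sum.inl s) x)
        + (Matrix.of fun x f => a (Sum.inr f) x) * Matrix.diagonal (fun f => w (Sum.inr f)) *
          (Matrix.of fun f x => b (Sum.inr f) x) := by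
  ext x y
  simp [Matrix.mul_apply, Matrix.mul_diagonal, Fintype.sum_sum_type, Matrix.diagonal_apply]

lemma exp_conj_rect {ι n : Type*} [Fintype ι] [DecidableEq ι] [Fintype n] [DecidableEq n]
    (A : Matrix n ι ℂ) (B : Matrix ι n ℂ) (M : Matrix ι ι ℂ)
    (hAB : A * B = 1) (hBA : B * A = 1) :
    exp (A * M * B) = A * exp M * B := by
  let f : Matrix ι ι ℂ →ₗ[ℂ] Matrix n n ℂ :=
  { toFun := fun X => A * X * B
    map_add' := fun X Y => by simp [Matrix.mul_add, Matrix.add_mul]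
    map_smul' := fun c X => by simp [Matrix.mul_smul, Matrix.smul_mul] }
  let f' := LinearMap.toContinuousLinearMap f
  have hpow : ∀ k : ℕ, A * M ^ k * B = (A * M * B) ^ k := by
    intro k
    induction k with
    | zero => simpa using hAB
    | succ k ih =>
      rw [pow_succ, pow_succ, ← ih]
      simp only [Matrix.mul_assoc]
      rw [← Matrix.mul_assoc B A, hBA, Matrix.one_mul]
  have h1 : HasSum (fun k : ℕ => ((k.factorial : ℂ))⁻¹ • M ^ k) (exp M) := by
    have := expSeries_hasSum_exp (𝕂 := ℂ) M
    simp only [expSeries_apply_eq] at this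
    exact this
  have key : HasSum (fun k : ℕ => f' (((k.factorial : ℂ))⁻¹ • M ^ k)) (f' (exp M)) :=
    h1.mapL f'
  have key2 : (fun k : ℕ => f' (((k.factorial : ℂ))⁻¹ • M ^ k))
      = fun k : ℕ => ((k.factorial : ℂ))⁻¹ • (A * M * B) ^ k := by
    funext k
    rw [_root_.map_smul, ← hpow k]
    rfl
  rw [key2] at key
  have h4 : HasSum (fun k : ℕ => ((k.factorial : ℂ))⁻¹ • (A * M * B) ^ k)
      (exp (A * M * B)) := by
    have := expSeries_hasSum_exp (𝕂 := ℂ) (A * M * B)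
    simp only [expSeries_apply_eq] at this
    exact this
  exact h4.unique key

set_option maxHeartbeats 1600000 in
/-- Under the adiabatic-elimination eigensystem hypotheses, the initial-condition term
`J(t) = (1 - P(t)) * exp(t • L) * Q` of the TCL master equation decays exponentially:
`‖(1 - exp(t • L) * P * Π(t)⁻¹ * P) * exp(t • L) * Q‖ ≤ C * exp(-δ t)` (Frobenius norm). -/
theorem stmt_13 {n S F : Type*} [Fintype n] [DecidableEq n]
    [Fintype S] [DecidableEq S] [Nonempty S] [Fintype F] [DecidableEq F] [Nonempty F]
    (L : Matrix n n ℂ) (r l r0 l0 : S ⊕ F → n → ℂ) (lam : S ⊕ F → ℂ)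
    (heig : ∀ i, L *ᵥ r i = lam i • r i)
    (hbi : ∀ i j, star (l i) ⬝ᵥ r j = if i = j then 1 else 0)
    (hcomp : ∑ i : S ⊕ F, vecMulVec (r i) (star (l i)) = 1)
    (hbi0 : ∀ i j, star (l0 i) ⬝ᵥ r0 j = if i = j then 1 else 0)
    (hcomp0 : ∑ i : S ⊕ F, vecMulVec (r0 i) (star (l0 i)) = 1)
    (hN : IsUnit (overlapN (n := n) l0 r)) (hM : IsUnit (overlapM (n := n) l r0))
    (hRe : ∀ s : S, (lam (Sum.inl s)).re ≤ 0)
    (hgap : 0 < gapDelta (S := S) (F := F) lam)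
    (hPi : ∀ t : ℝ, 0 ≤ t →
      IsUnit ((1 - slowProj r0 l0) + slowProj r0 l0 * exp (t • L) * slowProj r0 l0)) :
    ∃ C : ℝ, 0 ≤ C ∧ ∀ t : ℝ, 0 ≤ t →
      ‖(1 - exp (t • L) * slowProj r0 l0 *
            ((1 - slowProj r0 l0) + slowProj r0 l0 * exp (t • L) * slowProj r0 l0)⁻¹ *
            slowProj r0 l0) * exp (t • L) * (1 - slowProj r0 l0)‖
        ≤ C * Real.exp (-(gapDelta (S := S) (F := F) lam) * t) := by
  classical
  obtain ⟨s₀⟩ := ‹Nonempty S›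
  set δ := gapDelta (S := S) (F := F) lam with hδdef
  set μ := Finset.univ.sup' Finset.univ_nonempty (fun s : S => -(lam (Sum.inl s)).re) with hμdef
  have hμs : ∀ s : S, -(lam (Sum.inl s)).re ≤ μ :=
    fun s => Finset.le_sup' (fun s : S => -(lam (Sum.inl s)).re) (Finset.mem_univ s)
  have hμ0 : 0 ≤ μ := le_trans (by simpa using neg_nonneg.2 (hRe s₀)) (hμs s₀)
  have hinf : ∀ (s : S) (f : F),
      δ + μ ≤ (lam (Sum.inl s)).re - (lam (Sum.inr f)).re := by
    intro s f
    have h1 := Finset.inf'_le (b := (s, f))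
      (fun p : S × F => (lam (Sum.inl p.1) - lam (Sum.inr p.2)).re) (Finset.mem_univ (s, f))
    have h2 : δ = (Finset.univ.inf' Finset.univ_nonempty
        fun p : S × F => (lam (Sum.inl p.1) - lam (Sum.inr p.2)).re) - μ := by
      rw [hδdef, hμdef, gapDelta]
    rw [Complex.sub_re] at h1
    linarith
  have hfast : ∀ f : F, (lam (Sum.inr f)).re ≤ -(δ + μ) := by
    intro f
    have := hinf s₀ f
    have := hRe s₀
    linarith
  -- block matrices
  set A : Matrix n (S ⊕ F) ℂ := Matrix.of fun x i => r i x with hAdef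
  set B : Matrix (S ⊕ F) n ℂ := Matrix.of fun i x => star (l i x) with hBdef
  set AS : Matrix n S ℂ := Matrix.of fun x s => r (Sum.inl s) x with hASdef
  set AF : Matrix n F ℂ := Matrix.of fun x f => r (Sum.inr f) x with hAFdef
  set BS : Matrix S n ℂ := Matrix.of fun s x => star (l (Sum.inl s) x) with hBSdef
  set BF : Matrix F n ℂ := Matrix.of fun f x => star (l (Sum.inr f) x) with hBFdef
  set U : Matrix n S ℂ := Matrix.of fun x s => r0 (Sum.inl s) x with hUdef
  set V : Matrix S n ℂ := Matrix.of fun s x => star (l0 (Sum.inl s) x) with hVdef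
  set P : Matrix n n ℂ := slowProj r0 l0 with hPdef
  set NS : Matrix S S ℂ := overlapN (n := n) l0 r with hNSdef
  set MS : Matrix S S ℂ := overlapM (n := n) l r0 with hMSdef
  set NF : Matrix S F ℂ := Matrix.of fun s f => star (l0 (Sum.inl s)) ⬝ᵥ r (Sum.inr f) with hNFdef
  set MF : Matrix F S ℂ := Matrix.of fun f s => star (l (Sum.inr f)) ⬝ᵥ r0 (Sum.inl s) with hMFdef
  set DS : ℝ → Matrix S S ℂ :=
    fun t => Matrix.diagonal fun s => Complex.exp (t * lam (Sum.inl s)) with hDSdef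
  set DF : ℝ → Matrix F F ℂ :=
    fun t => Matrix.diagonal fun f => Complex.exp (t * lam (Sum.inr f)) with hDFdef
  set DSinv : ℝ → Matrix S S ℂ :=
    fun t => Matrix.diagonal fun s => Complex.exp (-(t * lam (Sum.inl s))) with hDSinvdef
  -- basic identities
  have hAB : A * B = 1 := by
    ext x y
    have h := congrFun (congrFun hcomp x) y
    simp only [Matrix.sum_apply, Matrix.vecMulVec_apply, Pi.star_apply, Matrix.one_apply] at h
    rw [Matrix.mul_apply]
    simp only [hAdef, hBdef, Matrix.of_apply]
    simpa [Matrix.one_apply] using h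
  have hBA : B * A = 1 := by
    ext i j
    have h := hbi i j
    simp only [dotProduct, Pi.star_apply] at h
    rw [Matrix.mul_apply]
    simp only [hBdef, hAdef, Matrix.of_apply]
    simpa [Matrix.one_apply] using h
  have hVU : V * U = 1 := by
    ext s s'
    have h := hbi0 (Sum.inl s) (Sum.inl s')
    simp only [dotProduct, Pi.star_apply, Sum.inl.injEq] at h
    rw [Matrix.mul_apply]
    simp only [hVdef, hUdef, Matrix.of_apply]
    simpa [Matrix.one_apply] using h
  have hPUV : P = U * V := by
    rw [hPdef]
    ext x y
    rw [Matrix.mul_apply]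
    simp [slowProj, Matrix.sum_apply, Matrix.vecMulVec_apply, hUdef, hVdef]
  have hLA : L * A = A * Matrix.diagonal lam := by
    ext x i
    have h := congrFun (heig i) x
    simp only [Matrix.mulVec, dotProduct, Pi.smul_apply, smul_eq_mul] at h
    rw [Matrix.mul_apply, Matrix.mul_diagonal]
    simp only [hAdef, Matrix.of_apply]
    rw [h]
    ring
  have hLdec : L = A * Matrix.diagonal lam * B := by
    calc L = L * (A * B) := by rw [hAB, Matrix.mul_one]
      _ = L * A * B := by rw [Matrix.mul_assoc]
      _ = A * Matrix.diagonal lam * B := by rw [hLA]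
  have hXform : ∀ t : ℝ,
      exp (t • L) = A * Matrix.diagonal (fun i => Complex.exp (t * lam i)) * B := by
    intro t
    have hdiag : Matrix.diagonal (fun i => (t : ℂ) * lam i)
        = t • Matrix.diagonal lam := by
      ext i j
      by_cases hij : i = j
      · subst hij; simp [Matrix.diagonal_apply_eq, Complex.real_smul]
      · simp [Matrix.diagonal_apply_ne _ hij, hij]
    have hsmul : t • L = A * Matrix.diagonal (fun i => (t : ℂ) * lam i) * B := by
      rw [hLdec, hdiag, Matrix.mul_smul, Matrix.smul_mul]
    rw [hsmul, exp_conj_rect A B _ hAB hBA, Matrix.exp_diagonal]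
    have he : exp (fun i => (t : ℂ) * lam i) = fun i => Complex.exp (t * lam i) := by
      funext i
      rw [Pi.coe_exp, Complex.exp_eq_exp_ℂ]
    rw [he]
  have hXsplit : ∀ t : ℝ, exp (t • L) = AS * DS t * BS + AF * DF t * BF := by
    intro t
    rw [hXform t]
    simp only [hAdef, hBdef, hASdef, hBSdef, hAFdef, hBFdef, hDSdef, hDFdef]
    exact split_ADB r (fun i x => star (l i x)) (fun i => Complex.exp (t * lam i))
  have hBSU : BS * U = MS := by
    ext s s'
    rw [Matrix.mul_apply]
    simp [hBSdef, hUdef, hMSdef, overlapM, dotProduct]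
  have hBFU : BF * U = MF := by
    ext f s'
    rw [Matrix.mul_apply]
    simp [hBFdef, hUdef, hMFdef, dotProduct]
  have hVAS : V * AS = NS := by
    ext s s'
    rw [Matrix.mul_apply]
    simp [hVdef, hASdef, hNSdef, overlapN, dotProduct]
  have hVAF : V * AF = NF := by
    ext s f
    rw [Matrix.mul_apply]
    simp [hVdef, hAFdef, hNFdef, dotProduct]
  have hNS1 : NS * NS⁻¹ = 1 := Matrix.mul_nonsing_inv _ ((Matrix.isUnit_iff_isUnit_det _).1 hN)
  have hNS2 : NS⁻¹ * NS = 1 := Matrix.nonsing_inv_mul _ ((Matrix.isUnit_iff_isUnit_det _).1 hN)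
  have hMS1 : MS * MS⁻¹ = 1 := Matrix.mul_nonsing_inv _ ((Matrix.isUnit_iff_isUnit_det _).1 hM)
  have hMS2 : MS⁻¹ * MS = 1 := Matrix.nonsing_inv_mul _ ((Matrix.isUnit_iff_isUnit_det _).1 hM)
  have hDSDSinv : ∀ t : ℝ, DS t * DSinv t = 1 := by
    intro t
    simp only [hDSdef, hDSinvdef]
    rw [Matrix.diagonal_mul_diagonal]
    have he : ∀ hh : S → ℂ, (∀ s, hh s = 1) → Matrix.diagonal hh = 1 := by
      intro hh h
      have : hh = fun _ => 1 := funext h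
      rw [this]
      exact Matrix.diagonal_one
    refine he _ fun s => ?_
    rw [← Complex.exp_add]
    simp
  have hDSinvDS : ∀ t : ℝ, DSinv t * DS t = 1 := by
    intro t
    simp only [hDSdef, hDSinvdef]
    rw [Matrix.diagonal_mul_diagonal]
    have he : ∀ hh : S → ℂ, (∀ s, hh s = 1) → Matrix.diagonal hh = 1 := by
      intro hh h
      have : hh = fun _ => 1 := funext h
      rw [this]
      exact Matrix.diagonal_one
    refine he _ fun s => ?_
    rw [← Complex.exp_add]
    simp
  have hPP : P * P = P := by
    rw [hPUV, Matrix.mul_assoc, ← Matrix.mul_assoc V U V, hVU, Matrix.one_mul]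
  have hPU : P * U = U := by
    rw [hPUV, Matrix.mul_assoc, hVU, Matrix.mul_one]
  have hVP : V * P = V := by
    rw [hPUV, ← Matrix.mul_assoc, hVU, Matrix.one_mul]
  -- products with X
  have hXU : ∀ t : ℝ, exp (t • L) * U = AS * DS t * MS + AF * DF t * MF := by
    intro t
    rw [hXsplit t, Matrix.add_mul, Matrix.mul_assoc (AS * DS t) BS U, hBSU,
      Matrix.mul_assoc (AF * DF t) BF U, hBFU]
  have hVXU : ∀ t : ℝ, V * exp (t • L) * U = NS * DS t * MS + NF * DF t * MF := by
    intro t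
    rw [hXsplit t, Matrix.mul_add, Matrix.add_mul]
    rw [← Matrix.mul_assoc V (AS * DS t) BS, ← Matrix.mul_assoc V AS (DS t), hVAS]
    rw [← Matrix.mul_assoc V (AF * DF t) BF, ← Matrix.mul_assoc V AF (DF t), hVAF]
    rw [Matrix.mul_assoc (NS * DS t) BS U, hBSU, Matrix.mul_assoc (NF * DF t) BF U, hBFU]
  -- Pi facts
  have hPiP : ∀ t : ℝ,
      ((1 : Matrix n n ℂ) - P + P * exp (t • L) * P) * P
        = P * ((1 : Matrix n n ℂ) - P + P * exp (t • L) * P) := by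
    intro t
    have h1 : ((1 : Matrix n n ℂ) - P + P * exp (t • L) * P) * P
        = P * exp (t • L) * P := by
      rw [Matrix.add_mul, Matrix.sub_mul, Matrix.one_mul, hPP,
        Matrix.mul_assoc (P * exp (t • L)) P P, hPP, sub_self, zero_add]
    have h2 : P * ((1 : Matrix n n ℂ) - P + P * exp (t • L) * P)
        = P * exp (t • L) * P := by
      rw [Matrix.mul_add, Matrix.mul_sub, Matrix.mul_one,
        ← Matrix.mul_assoc P (P * exp (t • L)) P,
        ← Matrix.mul_assoc P P (exp (t • L)), hPP, sub_self, zero_add]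
    rw [h1, h2]
  have hVPi : ∀ t : ℝ,
      V * ((1 : Matrix n n ℂ) - P + P * exp (t • L) * P) = V * exp (t • L) * P := by
    intro t
    rw [Matrix.mul_add, Matrix.mul_sub, Matrix.mul_one, hVP,
      ← Matrix.mul_assoc V (P * exp (t • L)) P,
      ← Matrix.mul_assoc V P (exp (t • L)), hVP, sub_self, zero_add]
  have hVPiU : ∀ t : ℝ,
      V * ((1 : Matrix n n ℂ) - P + P * exp (t • L) * P) * U
        = NS * DS t * MS + NF * DF t * MF := by
    intro t
    rw [hVPi t, Matrix.mul_assoc (V * exp (t • L)) P U, hPU, hVXU t]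
  -- inverse facts for t ≥ 0
  have hPiInv : ∀ t : ℝ, 0 ≤ t →
      ((1 : Matrix n n ℂ) - P + P * exp (t • L) * P) *
        ((1 : Matrix n n ℂ) - P + P * exp (t • L) * P)⁻¹ = 1 ∧
      ((1 : Matrix n n ℂ) - P + P * exp (t • L) * P)⁻¹ *
        ((1 : Matrix n n ℂ) - P + P * exp (t • L) * P) = 1 := by
    intro t ht
    have h := hPi t ht
    have hd := (Matrix.isUnit_iff_isUnit_det _).1 h
    exact ⟨Matrix.mul_nonsing_inv _ hd, Matrix.nonsing_inv_mul _ hd⟩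
  have hPiInvP : ∀ t : ℝ, 0 ≤ t →
      ((1 : Matrix n n ℂ) - P + P * exp (t • L) * P)⁻¹ * P
        = P * ((1 : Matrix n n ℂ) - P + P * exp (t • L) * P)⁻¹ := by
    intro t ht
    obtain ⟨hI1, hI2⟩ := hPiInv t ht
    set Pt := (1 : Matrix n n ℂ) - P + P * exp (t • L) * P with hPt
    calc Pt⁻¹ * P = Pt⁻¹ * P * (Pt * Pt⁻¹) := by rw [hI1, Matrix.mul_one]
      _ = Pt⁻¹ * (P * Pt) * Pt⁻¹ := by simp only [Matrix.mul_assoc]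
      _ = Pt⁻¹ * (Pt * P) * Pt⁻¹ := by rw [← hPiP t]
      _ = (Pt⁻¹ * Pt) * (P * Pt⁻¹) := by simp only [Matrix.mul_assoc]
      _ = P * Pt⁻¹ := by rw [hI2, Matrix.one_mul]
  have hUVZ : ∀ (Z : Matrix n S ℂ), U * (V * Z) = P * Z := by
    intro Z
    rw [hPUV, Matrix.mul_assoc]
  have hinvWW : ∀ t : ℝ, 0 ≤ t →
      (V * ((1 : Matrix n n ℂ) - P + P * exp (t • L) * P)⁻¹ * U) *
        (V * ((1 : Matrix n n ℂ) - P + P * exp (t • L) * P) * U) = 1 := by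
    intro t ht
    obtain ⟨hI1, hI2⟩ := hPiInv t ht
    have hc := hPiInvP t ht
    set Pt := (1 : Matrix n n ℂ) - P + P * exp (t • L) * P with hPt
    calc (V * Pt⁻¹ * U) * (V * Pt * U)
        = V * (Pt⁻¹ * (U * (V * (Pt * U)))) := by simp only [Matrix.mul_assoc]
      _ = V * (Pt⁻¹ * (P * (Pt * U))) := by rw [hUVZ (Pt * U)]
      _ = V * ((Pt⁻¹ * P) * (Pt * U)) := by simp only [Matrix.mul_assoc]
      _ = V * ((P * Pt⁻¹) * (Pt * U)) := by rw [hc]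
      _ = V * (P * ((Pt⁻¹ * Pt) * U)) := by simp only [Matrix.mul_assoc]
      _ = V * (P * U) := by rw [hI2, Matrix.one_mul]
      _ = 1 := by rw [hPU, hVU]
  -- norm estimates on diagonal blocks
  have hrepart : ∀ (t : ℝ) (z : ℂ), ((t : ℂ) * z).re = t * z.re := by
    intro t z
    simp [Complex.mul_re]
  have hnormDF : ∀ t : ℝ, 0 ≤ t →
      ‖DF t‖ ≤ (Fintype.card F : ℝ) * Real.exp (-(δ + μ) * t) := by
    intro t ht
    refine (norm_diagonal_le_sum _).trans ?_
    have hb : ∀ f : F, ‖Complex.exp ((t : ℂ) * lam (Sum.inr f))‖ ≤ Real.exp (-(δ + μ) * t) := by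
      intro f
      rw [Complex.norm_exp, hrepart]
      refine Real.exp_le_exp.2 ?_
      calc t * (lam (Sum.inr f)).re ≤ t * (-(δ + μ)) :=
            mul_le_mul_of_nonneg_left (hfast f) ht
        _ = -(δ + μ) * t := by ring
    calc ∑ f : F, ‖Complex.exp ((t : ℂ) * lam (Sum.inr f))‖
        ≤ ∑ _f : F, Real.exp (-(δ + μ) * t) := Finset.sum_le_sum fun f _ => hb f
      _ = (Fintype.card F : ℝ) * Real.exp (-(δ + μ) * t) := by
          rw [Finset.sum_const, nsmul_eq_mul, Finset.card_univ]
  have hnormDS : ∀ t : ℝ, 0 ≤ t → ‖DS t‖ ≤ (Fintype.card S : ℝ) := by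
    intro t ht
    refine (norm_diagonal_le_sum _).trans ?_
    have hb : ∀ s : S, ‖Complex.exp ((t : ℂ) * lam (Sum.inl s))‖ ≤ 1 := by
      intro s
      rw [Complex.norm_exp, hrepart]
      refine Real.exp_le_one_iff.2 ?_
      exact mul_nonpos_of_nonneg_of_nonpos ht (hRe s)
    calc ∑ s : S, ‖Complex.exp ((t : ℂ) * lam (Sum.inl s))‖
        ≤ ∑ _s : S, (1 : ℝ) := Finset.sum_le_sum fun s _ => hb s
      _ = (Fintype.card S : ℝ) := by
          rw [Finset.sum_const, nsmul_eq_mul, Finset.card_univ, mul_one]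
  have hnormDSinv : ∀ t : ℝ, 0 ≤ t →
      ‖DSinv t‖ ≤ (Fintype.card S : ℝ) * Real.exp (μ * t) := by
    intro t ht
    refine (norm_diagonal_le_sum _).trans ?_
    have hb : ∀ s : S, ‖Complex.exp (-((t : ℂ) * lam (Sum.inl s)))‖ ≤ Real.exp (μ * t) := by
      intro s
      rw [Complex.norm_exp, Complex.neg_re, hrepart]
      refine Real.exp_le_exp.2 ?_
      calc -(t * (lam (Sum.inl s)).re) = t * (-(lam (Sum.inl s)).re) := by ring
        _ ≤ t * μ := mul_le_mul_of_nonneg_left (hμs s) ht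
        _ = μ * t := by ring
    calc ∑ s : S, ‖Complex.exp (-((t : ℂ) * lam (Sum.inl s)))‖
        ≤ ∑ _s : S, Real.exp (μ * t) := Finset.sum_le_sum fun s _ => hb s
      _ = (Fintype.card S : ℝ) * Real.exp (μ * t) := by
          rw [Finset.sum_const, nsmul_eq_mul, Finset.card_univ]
  have hDCD : ∀ t : ℝ, 0 ≤ t → ∀ C : Matrix F S ℂ,
      ‖DF t * C * DSinv t‖ ≤ Real.exp (-(δ + μ) * t) * ∑ f, ∑ s, ‖C f s‖ := by
    intro t ht C
    simp only [hDFdef, hDSinvdef]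
    refine norm_dcd_le _ _ C _ ?_
    intro f s
    rw [Complex.norm_exp, Complex.norm_exp,
      Complex.neg_re, hrepart, hrepart, ← Real.exp_add]
    refine Real.exp_le_exp.2 ?_
    have h := hinf s f
    calc t * (lam (Sum.inr f)).re + -(t * (lam (Sum.inl s)).re)
        = t * ((lam (Sum.inr f)).re - (lam (Sum.inl s)).re) := by ring
      _ ≤ t * (-(δ + μ)) := by
          refine mul_le_mul_of_nonneg_left ?_ ht
          linarith
      _ = -(δ + μ) * t := by ring
  -- the perturbation eps and its smallness
  set eps : ℝ → Matrix S S ℂ :=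
    fun t => DSinv t * (NS⁻¹ * NF) * DF t * (MF * MS⁻¹) with hepsdef
  set sC6 : ℝ := ∑ f, ∑ s, ‖(MF * MS⁻¹) f s‖ with hsC6def
  have hsC60 : 0 ≤ sC6 := by positivity
  set cepsc : ℝ := (Fintype.card S : ℝ) * ‖NS⁻¹ * NF‖ * (Fintype.card F : ℝ) * ‖MF * MS⁻¹‖
    with hcepscdef
  have hcepsc0 : 0 ≤ cepsc := by positivity
  have hexpmul : ∀ t : ℝ, Real.exp (μ * t) * Real.exp (-(δ + μ) * t) = Real.exp (-δ * t) := by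
    intro t
    rw [← Real.exp_add]
    congr 1
    ring
  have hepseq : ∀ t : ℝ, eps t = DSinv t * (NS⁻¹ * NF) * DF t * (MF * MS⁻¹) := by
    intro t
    simp only [hepsdef]
  have hepsbound : ∀ t : ℝ, 0 ≤ t → ‖eps t‖ ≤ cepsc * Real.exp (-δ * t) := by
    intro t ht
    have h1 : ‖eps t‖ ≤ ‖DSinv t‖ * ‖NS⁻¹ * NF‖ * ‖DF t‖ * ‖MF * MS⁻¹‖ := by
      rw [hepseq t]
      refine (Matrix.frobenius_norm_mul _ _).trans ?_
      refine mul_le_mul_of_nonneg_right ?_ (norm_nonneg _)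
      refine (Matrix.frobenius_norm_mul _ _).trans ?_
      refine mul_le_mul_of_nonneg_right ?_ (norm_nonneg _)
      exact Matrix.frobenius_norm_mul _ _
    calc ‖eps t‖ ≤ ‖DSinv t‖ * ‖NS⁻¹ * NF‖ * ‖DF t‖ * ‖MF * MS⁻¹‖ := h1
      _ ≤ ((Fintype.card S : ℝ) * Real.exp (μ * t)) * ‖NS⁻¹ * NF‖ *
            ((Fintype.card F : ℝ) * Real.exp (-(δ + μ) * t)) * ‖MF * MS⁻¹‖ := by
          refine mul_le_mul_of_nonneg_right ?_ (norm_nonneg _)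
          refine mul_le_mul ?_ (hnormDF t ht) (norm_nonneg _) (by positivity)
          exact mul_le_mul_of_nonneg_right (hnormDSinv t ht) (norm_nonneg _)
      _ = cepsc * (Real.exp (μ * t) * Real.exp (-(δ + μ) * t)) := by
          rw [hcepscdef]; ring
      _ = cepsc * Real.exp (-δ * t) := by rw [hexpmul t]
  set T : ℝ := Real.log (2 * cepsc + 2) / δ with hTdef
  have hT0 : 0 ≤ T := by
    refine div_nonneg (Real.log_nonneg (by linarith)) (le_of_lt hgap)
  have hsmall : ∀ t : ℝ, T ≤ t → ‖eps t‖ ≤ 1 / 2 := by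
    intro t htT
    have ht0 : 0 ≤ t := le_trans hT0 htT
    have h2 : Real.exp (-δ * t) ≤ Real.exp (-δ * T) := by
      refine Real.exp_le_exp.2 ?_
      have := mul_le_mul_of_nonneg_left htT (le_of_lt hgap)
      simp only [neg_mul]
      exact neg_le_neg this
    have h3 : Real.exp (-δ * T) = (2 * cepsc + 2)⁻¹ := by
      rw [show -δ * T = -(δ * T) by ring, Real.exp_neg]
      congr 1
      rw [hTdef, mul_div_cancel₀ _ (ne_of_gt hgap)]
      exact Real.exp_log (by linarith)
    calc ‖eps t‖ ≤ cepsc * Real.exp (-δ * t) := hepsbound t ht0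
      _ ≤ cepsc * (2 * cepsc + 2)⁻¹ := by
          rw [← h3]
          exact mul_le_mul_of_nonneg_left h2 hcepsc0
      _ ≤ 1 / 2 := by
          rw [← div_eq_mul_inv, div_le_iff₀ (by linarith)]
          linarith
  -- W factorization
  have cDS : ∀ (t : ℝ) (Z : Matrix S S ℂ), DS t * (DSinv t * Z) = Z := by
    intro t Z
    rw [← Matrix.mul_assoc, hDSDSinv t, Matrix.one_mul]
  have hWfact : ∀ t : ℝ,
      NS * DS t * (1 + eps t) * MS = NS * DS t * MS + NF * DF t * MF := by
    intro t
    simp only [hepsdef, Matrix.mul_add, Matrix.add_mul, Matrix.mul_one, Matrix.mul_assoc]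
    rw [hMS2, Matrix.mul_one, cDS t, ← Matrix.mul_assoc NS NS⁻¹, hNS1, Matrix.one_mul]
  -- Neumann inverse for large t
  have hGfacts : ∀ t : ℝ, T ≤ t →
      (1 + eps t) * (1 + eps t)⁻¹ = 1 ∧ (1 + eps t)⁻¹ * (1 + eps t) = 1 ∧
        ‖(1 + eps t)⁻¹‖ ≤ 2 * ‖(1 : Matrix S S ℂ)‖ := by
    intro t htT
    have hhalf := hsmall t htT
    have hlt : ‖-eps t‖ < 1 := by
      rw [norm_neg]
      linarith
    have hunit : IsUnit (1 + eps t) := by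
      have := isUnit_one_sub_of_norm_lt_one hlt
      simpa [sub_neg_eq_add] using this
    have hd := (Matrix.isUnit_iff_isUnit_det _).1 hunit
    have hG1 : (1 + eps t) * (1 + eps t)⁻¹ = 1 := Matrix.mul_nonsing_inv _ hd
    have hG2 : (1 + eps t)⁻¹ * (1 + eps t) = 1 := Matrix.nonsing_inv_mul _ hd
    refine ⟨hG1, hG2, ?_⟩
    have hGid : (1 + eps t)⁻¹ = 1 - (1 + eps t)⁻¹ * eps t := by
      have h := hG2
      rw [Matrix.mul_add, Matrix.mul_one] at h
      exact eq_sub_of_add_eq h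
    have hn1 := norm_mul_le ((1 + eps t)⁻¹) (eps t)
    have hn2 : ‖(1 + eps t)⁻¹‖ ≤ ‖(1 : Matrix S S ℂ)‖ + ‖(1 + eps t)⁻¹ * eps t‖ := by
      calc ‖(1 + eps t)⁻¹‖ = ‖(1 : Matrix S S ℂ) - (1 + eps t)⁻¹ * eps t‖ := by rw [← hGid]
        _ ≤ ‖(1 : Matrix S S ℂ)‖ + ‖(1 + eps t)⁻¹ * eps t‖ := norm_sub_le _ _
    have h4 : ‖(1 + eps t)⁻¹ * eps t‖ ≤ ‖(1 + eps t)⁻¹‖ * (1 / 2) :=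
      le_trans hn1 (mul_le_mul_of_nonneg_left hhalf (norm_nonneg _))
    have h5 : (0:ℝ) ≤ ‖(1 : Matrix S S ℂ)‖ := norm_nonneg _
    linarith
  -- formula for the inverse overlap for large t
  have hinvWfor : ∀ t : ℝ, T ≤ t →
      V * ((1 : Matrix n n ℂ) - P + P * exp (t • L) * P)⁻¹ * U
        = MS⁻¹ * (1 + eps t)⁻¹ * DSinv t * NS⁻¹ := by
    intro t htT
    have ht0 : 0 ≤ t := le_trans hT0 htT
    obtain ⟨hG1, hG2, hGn⟩ := hGfacts t htT
    have hZ : (V * ((1 : Matrix n n ℂ) - P + P * exp (t • L) * P) * U) *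
        (MS⁻¹ * (1 + eps t)⁻¹ * DSinv t * NS⁻¹) = 1 := by
      rw [hVPiU t, ← hWfact t]
      simp only [Matrix.mul_assoc]
      rw [← Matrix.mul_assoc MS MS⁻¹, hMS1, Matrix.one_mul,
        ← Matrix.mul_assoc (1 + eps t) (1 + eps t)⁻¹, hG1, Matrix.one_mul,
        cDS t, hNS1]
    have uniq : ∀ (W iW Z : Matrix S S ℂ), iW * W = 1 → W * Z = 1 → iW = Z := by
      intro W iW Z h1 h2
      calc iW = iW * (W * Z) := by rw [h2, Matrix.mul_one]
        _ = (iW * W) * Z := by rw [Matrix.mul_assoc]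
        _ = Z := by rw [h1, Matrix.one_mul]
    exact uniq _ _ _ (hinvWW t ht0) hZ
  -- factorization of the residual
  have hfactor : ∀ t : ℝ,
      exp (t • L) - exp (t • L) * U * (MS⁻¹ * BS)
        = AF * DF t * (BF - MF * (MS⁻¹ * BS)) := by
    intro t
    rw [hXU t, hXsplit t]
    rw [Matrix.add_mul, Matrix.mul_sub]
    rw [Matrix.mul_assoc (AS * DS t) MS (MS⁻¹ * BS), ← Matrix.mul_assoc MS MS⁻¹ BS,
      hMS1, Matrix.one_mul]
    rw [Matrix.mul_assoc (AF * DF t) MF (MS⁻¹ * BS)]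
    exact add_sub_add_left_eq_sub _ _ _
  -- the key algebraic identity
  have hkey : ∀ t : ℝ, 0 ≤ t →
      (1 - exp (t • L) * P * ((1 : Matrix n n ℂ) - P + P * exp (t • L) * P)⁻¹ * P) *
          exp (t • L) * (1 - P)
        = (1 - exp (t • L) * U *
              (V * ((1 : Matrix n n ℂ) - P + P * exp (t • L) * P)⁻¹ * U) * V) *
            (AF * DF t * (BF - MF * (MS⁻¹ * BS))) := by
    intro t ht
    set X := exp (t • L) with hX
    set Pt := (1 : Matrix n n ℂ) - P + P * X * P with hPt
    set iW := V * Pt⁻¹ * U with hiW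
    set K := X * U * iW * V with hK
    have step0 : X * P * Pt⁻¹ * P = K := by
      rw [hK, hiW, hPUV]
      simp only [Matrix.mul_assoc]
    have hiWW : iW * (V * X * U) = 1 := by
      have e : V * Pt * U = V * X * U := by
        rw [hVPiU t, hVXU t]
      rw [hiW, ← e]
      exact hinvWW t ht
    have step1 : K * (X * P) = X * P := by
      have h5 : iW * (V * (X * (U * V))) = V := by
        have e : V * (X * (U * V)) = (V * X * U) * V := by
          simp only [Matrix.mul_assoc]
        rw [e, ← Matrix.mul_assoc iW (V * X * U) V, hiWW, Matrix.one_mul]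
      conv_lhs => rw [hK, hPUV]
      simp only [Matrix.mul_assoc]
      rw [h5, hPUV]
    have hz : (1 - K) * (X * P) = 0 := by
      rw [Matrix.sub_mul, Matrix.one_mul, step1, sub_self]
    have hz2 : (1 - K) * (X * U * (MS⁻¹ * BS)) = 0 := by
      have e : X * U * (MS⁻¹ * BS) = (X * P) * (U * (MS⁻¹ * BS)) := by
        rw [hPUV]
        simp only [Matrix.mul_assoc]
        rw [← Matrix.mul_assoc V U (MS⁻¹ * BS), hVU, Matrix.one_mul]
      rw [e, ← Matrix.mul_assoc (1 - K) (X * P), hz, Matrix.zero_mul]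
    have lhs_eq : (1 - K) * X * (1 - P) = (1 - K) * X := by
      rw [Matrix.mul_sub, Matrix.mul_one, Matrix.mul_assoc (1 - K) X P, hz, sub_zero]
    have rhs_eq : (1 - K) * (AF * DF t * (BF - MF * (MS⁻¹ * BS))) = (1 - K) * X := by
      rw [← hfactor t, Matrix.mul_sub, hz2, sub_zero]
    rw [step0, lhs_eq, rhs_eq]
  -- norm bound for the projector term, for large t
  set c7 : ℝ := ‖NS⁻¹ * NF‖ with hc7def
  set cS : ℝ := (Fintype.card S : ℝ) with hcSdef
  set cF : ℝ := (Fintype.card F : ℝ) with hcFdef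
  set cK : ℝ := (‖AS‖ + ‖AF‖ * sC6 +
      (‖AS‖ * cS + ‖AF‖ * (cF * ‖MF * MS⁻¹‖)) *
        (2 * ‖(1 : Matrix S S ℂ)‖ * (cS * c7 * sC6))) * ‖NS⁻¹ * V‖ with hcKdef
  have hcK0 : 0 ≤ cK := by positivity
  have hexpone : ∀ t : ℝ, 0 ≤ t → Real.exp (-(δ + μ) * t) ≤ 1 := by
    intro t ht
    refine Real.exp_le_one_iff.2 ?_
    have : 0 ≤ (δ + μ) * t := mul_nonneg (by linarith) ht
    linarith
  have hKbound : ∀ t : ℝ, T ≤ t →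
      ‖exp (t • L) * U *
          (V * ((1 : Matrix n n ℂ) - P + P * exp (t • L) * P)⁻¹ * U) * V‖ ≤ cK := by
    intro t htT
    have ht0 : 0 ≤ t := le_trans hT0 htT
    obtain ⟨hG1, hG2, hGn⟩ := hGfacts t htT
    have hKform : exp (t • L) * U *
          (V * ((1 : Matrix n n ℂ) - P + P * exp (t • L) * P)⁻¹ * U) * V
        = (AS * DS t + AF * DF t * (MF * MS⁻¹)) * ((1 + eps t)⁻¹ * DSinv t) *
            (NS⁻¹ * V) := by
      rw [hinvWfor t htT, hXU t]
      simp only [Matrix.add_mul, Matrix.mul_assoc]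
      rw [← Matrix.mul_assoc MS MS⁻¹ _, hMS1, Matrix.one_mul]
    have hGid : (1 + eps t)⁻¹ = 1 - (1 + eps t)⁻¹ * eps t := by
      have h := hG2
      rw [Matrix.mul_add, Matrix.mul_one] at h
      exact eq_sub_of_add_eq h
    have hGsplit : (1 + eps t)⁻¹ * DSinv t
        = DSinv t - (1 + eps t)⁻¹ * (eps t * DSinv t) := by
      conv_lhs => rw [hGid]
      rw [Matrix.sub_mul, Matrix.one_mul, Matrix.mul_assoc]
    have hY1DSinv : (AS * DS t + AF * DF t * (MF * MS⁻¹)) * DSinv t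
        = AS + AF * (DF t * (MF * MS⁻¹) * DSinv t) := by
      simp only [Matrix.add_mul, Matrix.mul_assoc]
      rw [hDSDSinv t, Matrix.mul_one]
    have heDSinv : eps t * DSinv t
        = DSinv t * (NS⁻¹ * NF) * (DF t * (MF * MS⁻¹) * DSinv t) := by
      rw [hepseq t]
      simp only [Matrix.mul_assoc]
    have hZ6e : ‖DF t * (MF * MS⁻¹) * DSinv t‖ ≤ Real.exp (-(δ + μ) * t) * sC6 :=
      hDCD t ht0 (MF * MS⁻¹)
    have hZ6one : ‖DF t * (MF * MS⁻¹) * DSinv t‖ ≤ sC6 := by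
      refine hZ6e.trans ?_
      calc Real.exp (-(δ + μ) * t) * sC6 ≤ 1 * sC6 :=
            mul_le_mul_of_nonneg_right (hexpone t ht0) hsC60
        _ = sC6 := one_mul _
    have hY1n : ‖AS * DS t + AF * DF t * (MF * MS⁻¹)‖
        ≤ ‖AS‖ * cS + ‖AF‖ * (cF * ‖MF * MS⁻¹‖) := by
      refine (norm_add_le _ _).trans ?_
      have h1 : ‖AS * DS t‖ ≤ ‖AS‖ * cS := by
        refine (Matrix.frobenius_norm_mul _ _).trans ?_
        exact mul_le_mul_of_nonneg_left (hnormDS t ht0) (norm_nonneg _)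
      have h2 : ‖AF * DF t * (MF * MS⁻¹)‖ ≤ ‖AF‖ * (cF * ‖MF * MS⁻¹‖) := by
        refine (Matrix.frobenius_norm_mul _ _).trans ?_
        have h3 : ‖AF * DF t‖ ≤ ‖AF‖ * cF := by
          refine (Matrix.frobenius_norm_mul _ _).trans ?_
          refine mul_le_mul_of_nonneg_left ?_ (norm_nonneg _)
          refine (hnormDF t ht0).trans ?_
          calc cF * Real.exp (-(δ + μ) * t) ≤ cF * 1 :=
                mul_le_mul_of_nonneg_left (hexpone t ht0) (by positivity)
            _ = cF := mul_one _
        calc ‖AF * DF t‖ * ‖MF * MS⁻¹‖ ≤ (‖AF‖ * cF) * ‖MF * MS⁻¹‖ :=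
              mul_le_mul_of_nonneg_right h3 (norm_nonneg _)
          _ = ‖AF‖ * (cF * ‖MF * MS⁻¹‖) := by ring
      linarith
    have hED : ‖eps t * DSinv t‖ ≤ cS * c7 * sC6 := by
      rw [heDSinv]
      refine (Matrix.frobenius_norm_mul _ _).trans ?_
      have h1 : ‖DSinv t * (NS⁻¹ * NF)‖ ≤ (cS * Real.exp (μ * t)) * c7 := by
        refine (Matrix.frobenius_norm_mul _ _).trans ?_
        exact mul_le_mul_of_nonneg_right (hnormDSinv t ht0) (norm_nonneg _)
      calc ‖DSinv t * (NS⁻¹ * NF)‖ * ‖DF t * (MF * MS⁻¹) * DSinv t‖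
          ≤ ((cS * Real.exp (μ * t)) * c7) * (Real.exp (-(δ + μ) * t) * sC6) := by
            refine mul_le_mul h1 hZ6e (norm_nonneg _) ?_
            positivity
        _ = (cS * c7 * sC6) * (Real.exp (μ * t) * Real.exp (-(δ + μ) * t)) := by ring
        _ = (cS * c7 * sC6) * Real.exp (-δ * t) := by rw [hexpmul t]
        _ ≤ (cS * c7 * sC6) * 1 := by
            refine mul_le_mul_of_nonneg_left ?_ (by positivity)
            refine Real.exp_le_one_iff.2 ?_
            have : 0 ≤ δ * t := mul_nonneg (le_of_lt hgap) ht0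
            linarith
        _ = cS * c7 * sC6 := mul_one _
    have hmid : ‖(AS * DS t + AF * DF t * (MF * MS⁻¹)) * ((1 + eps t)⁻¹ * DSinv t)‖
        ≤ ‖AS‖ + ‖AF‖ * sC6 +
          (‖AS‖ * cS + ‖AF‖ * (cF * ‖MF * MS⁻¹‖)) *
            (2 * ‖(1 : Matrix S S ℂ)‖ * (cS * c7 * sC6)) := by
      rw [hGsplit, Matrix.mul_sub, hY1DSinv]
      refine (norm_sub_le _ _).trans ?_
      have h1 : ‖AS + AF * (DF t * (MF * MS⁻¹) * DSinv t)‖ ≤ ‖AS‖ + ‖AF‖ * sC6 := by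
        refine (norm_add_le _ _).trans ?_
        have := (Matrix.frobenius_norm_mul AF (DF t * (MF * MS⁻¹) * DSinv t)).trans
          (mul_le_mul_of_nonneg_left hZ6one (norm_nonneg AF))
        linarith
      have h2 : ‖(AS * DS t + AF * DF t * (MF * MS⁻¹)) *
            ((1 + eps t)⁻¹ * (eps t * DSinv t))‖
          ≤ (‖AS‖ * cS + ‖AF‖ * (cF * ‖MF * MS⁻¹‖)) *
            (2 * ‖(1 : Matrix S S ℂ)‖ * (cS * c7 * sC6)) := by
        refine (Matrix.frobenius_norm_mul _ _).trans ?_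
        refine mul_le_mul hY1n ?_ (norm_nonneg _) ?_
        · refine (Matrix.frobenius_norm_mul _ _).trans ?_
          calc ‖(1 + eps t)⁻¹‖ * ‖eps t * DSinv t‖
              ≤ (2 * ‖(1 : Matrix S S ℂ)‖) * (cS * c7 * sC6) := by
                refine mul_le_mul hGn hED (norm_nonneg _) ?_
                positivity
            _ = 2 * ‖(1 : Matrix S S ℂ)‖ * (cS * c7 * sC6) := by ring
        · positivity
      linarith
    rw [hKform]
    refine (Matrix.frobenius_norm_mul _ _).trans ?_
    rw [hcKdef]
    exact mul_le_mul_of_nonneg_right hmid (norm_nonneg _)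
  -- the large-time bound
  set Cbig : ℝ := (‖(1 : Matrix n n ℂ)‖ + cK) *
    (‖AF‖ * cF * ‖BF - MF * (MS⁻¹ * BS)‖) with hCbigdef
  have hCbig0 : 0 ≤ Cbig := by positivity
  have hJbig : ∀ t : ℝ, T ≤ t →
      ‖(1 - exp (t • L) * P * ((1 : Matrix n n ℂ) - P + P * exp (t • L) * P)⁻¹ * P) *
          exp (t • L) * (1 - P)‖ ≤ Cbig * Real.exp (-δ * t) := by
    intro t htT
    have ht0 : 0 ≤ t := le_trans hT0 htT
    rw [hkey t ht0]
    have h1 : ‖(1 : Matrix n n ℂ) - exp (t • L) * U *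
          (V * ((1 : Matrix n n ℂ) - P + P * exp (t • L) * P)⁻¹ * U) * V‖
        ≤ ‖(1 : Matrix n n ℂ)‖ + cK := by
      refine (norm_sub_le _ _).trans ?_
      have := hKbound t htT
      linarith
    have h2 : ‖AF * DF t * (BF - MF * (MS⁻¹ * BS))‖
        ≤ (‖AF‖ * cF * ‖BF - MF * (MS⁻¹ * BS)‖) * Real.exp (-(δ + μ) * t) := by
      refine (Matrix.frobenius_norm_mul _ _).trans ?_
      have h3 : ‖AF * DF t‖ ≤ ‖AF‖ * (cF * Real.exp (-(δ + μ) * t)) := by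
        refine (Matrix.frobenius_norm_mul _ _).trans ?_
        exact mul_le_mul_of_nonneg_left (hnormDF t ht0) (norm_nonneg _)
      calc ‖AF * DF t‖ * ‖BF - MF * (MS⁻¹ * BS)‖
          ≤ (‖AF‖ * (cF * Real.exp (-(δ + μ) * t))) * ‖BF - MF * (MS⁻¹ * BS)‖ :=
            mul_le_mul_of_nonneg_right h3 (norm_nonneg _)
        _ = (‖AF‖ * cF * ‖BF - MF * (MS⁻¹ * BS)‖) * Real.exp (-(δ + μ) * t) := by ring
    have h4 : Real.exp (-(δ + μ) * t) ≤ Real.exp (-δ * t) := by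
      refine Real.exp_le_exp.2 ?_
      have : 0 ≤ μ * t := mul_nonneg hμ0 ht0
      nlinarith
    calc ‖((1 : Matrix n n ℂ) - exp (t • L) * U *
            (V * ((1 : Matrix n n ℂ) - P + P * exp (t • L) * P)⁻¹ * U) * V) *
          (AF * DF t * (BF - MF * (MS⁻¹ * BS)))‖
        ≤ ‖(1 : Matrix n n ℂ) - exp (t • L) * U *
            (V * ((1 : Matrix n n ℂ) - P + P * exp (t • L) * P)⁻¹ * U) * V‖ *
          ‖AF * DF t * (BF - MF * (MS⁻¹ * BS))‖ := Matrix.frobenius_norm_mul _ _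
      _ ≤ (‖(1 : Matrix n n ℂ)‖ + cK) *
          ((‖AF‖ * cF * ‖BF - MF * (MS⁻¹ * BS)‖) * Real.exp (-(δ + μ) * t)) := by
          refine mul_le_mul h1 h2 (norm_nonneg _) ?_
          positivity
      _ = Cbig * Real.exp (-(δ + μ) * t) := by rw [hCbigdef]; ring
      _ ≤ Cbig * Real.exp (-δ * t) := mul_le_mul_of_nonneg_left h4 hCbig0
  -- continuity and bound on the compact interval [0, T]
  have hXc : Continuous fun t : ℝ => exp (t • L) :=
    exp_continuous.comp (continuous_id.smul continuous_const)
  have hPic : Continuous fun t : ℝ =>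
      (1 : Matrix n n ℂ) - P + P * exp (t • L) * P := by
    refine Continuous.add continuous_const ?_
    exact (continuous_const.mul hXc).mul continuous_const
  have hdetne : ∀ t ∈ Set.Icc (0 : ℝ) T,
      ((1 : Matrix n n ℂ) - P + P * exp (t • L) * P).det ≠ 0 := by
    intro t htm
    have h := (Matrix.isUnit_iff_isUnit_det _).1 (hPi t htm.1)
    exact IsUnit.ne_zero h
  have hInvC : ContinuousOn
      (fun t : ℝ => ((1 : Matrix n n ℂ) - P + P * exp (t • L) * P)⁻¹)
      (Set.Icc (0 : ℝ) T) := by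
    have hdet : Continuous fun t : ℝ =>
        ((1 : Matrix n n ℂ) - P + P * exp (t • L) * P).det := hPic.matrix_det
    have hadj : Continuous fun t : ℝ =>
        ((1 : Matrix n n ℂ) - P + P * exp (t • L) * P).adjugate := hPic.matrix_adjugate
    have h1 : ContinuousOn (fun t : ℝ =>
        (((1 : Matrix n n ℂ) - P + P * exp (t • L) * P).det)⁻¹ •
          ((1 : Matrix n n ℂ) - P + P * exp (t • L) * P).adjugate)
        (Set.Icc (0 : ℝ) T) :=
      (hdet.continuousOn.inv₀ hdetne).smul hadj.continuousOn
    refine h1.congr ?_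
    intro t _
    simp only [Matrix.inv_def, Ring.inverse_eq_inv]
  have hgC : ContinuousOn (fun t : ℝ =>
      ‖(1 - exp (t • L) * P * ((1 : Matrix n n ℂ) - P + P * exp (t • L) * P)⁻¹ * P) *
          exp (t • L) * (1 - P)‖ * Real.exp (δ * t)) (Set.Icc (0 : ℝ) T) := by
    refine ContinuousOn.mul ?_ ?_
    · refine ContinuousOn.norm ?_
      refine ContinuousOn.mul ?_ continuousOn_const
      refine ContinuousOn.mul ?_ hXc.continuousOn
      refine ContinuousOn.sub continuousOn_const ?_
      refine ContinuousOn.mul ?_ continuousOn_const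
      exact ((hXc.continuousOn.mul continuousOn_const).mul hInvC)
    · exact (Real.continuous_exp.comp (continuous_const.mul continuous_id)).continuousOn
  obtain ⟨t1, ht1mem, ht1max⟩ := isCompact_Icc.exists_isMaxOn
    (Set.nonempty_Icc.2 hT0) hgC
  set C1 : ℝ :=
    ‖(1 - exp (t1 • L) * P * ((1 : Matrix n n ℂ) - P + P * exp (t1 • L) * P)⁻¹ * P) *
        exp (t1 • L) * (1 - P)‖ * Real.exp (δ * t1) with hC1def
  have hC10 : 0 ≤ C1 := by positivity
  -- final assembly
  refine ⟨max C1 Cbig, le_trans hC10 (le_max_left _ _), ?_⟩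
  intro t ht
  have hgoal : Real.exp (-(gapDelta (S := S) (F := F) lam) * t) = Real.exp (-δ * t) := by
    rw [hδdef]
  rw [hgoal]
  by_cases htT : t ≤ T
  · have hmem : t ∈ Set.Icc (0 : ℝ) T := ⟨ht, htT⟩
    have h1 := (isMaxOn_iff.mp ht1max) t hmem
    have h2 : ‖(1 - exp (t • L) * P *
          ((1 : Matrix n n ℂ) - P + P * exp (t • L) * P)⁻¹ * P) *
          exp (t • L) * (1 - P)‖ * Real.exp (δ * t) ≤ max C1 Cbig :=
      le_trans h1 (le_max_left _ _)
    have h3 : Real.exp (δ * t) * Real.exp (-δ * t) = 1 := by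
      rw [← Real.exp_add]
      norm_num
    have h4 := mul_le_mul_of_nonneg_right h2 (Real.exp_nonneg (-δ * t))
    rw [mul_assoc, h3, mul_one] at h4
    exact h4
  · have htT' : T ≤ t := le_of_not_ge htT
    refine (hJbig t htT').trans ?_
    exact mul_le_mul_of_nonneg_right (le_max_right _ _) (Real.exp_nonneg _)
end

section
/- Let L be an n×n complex matrix with a biorthonormal complete eigensystem indexed by a finite type ι = S ⊕ F (a disjoint sum): L *ᵥ (r i) = λ i • (r i), star (l i) ⬝ᵥ (r j) = if i = j then 1 else 0, and ∑_{i∈ι} vecMulVec (r i) (star (l i)) = 1. Suppose Δ > 0 is a real number with Re(λ f) ≤ −Δ for every f ∈ F. Then for all real t ≥ 0, ‖exp(t • L) − ∑_{s∈S} Complex.exp(λ s * t) • vecMulVec (r s) (star (l s))‖ ≤ (∑_{f∈F} ‖vecMulVec (r f) (star (l f))‖) * Real.exp(−Δ * t), where ‖·‖ is the Frobenius norm on matrices. -/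
open Matrix NormedSpace

attribute [local instance] Matrix.frobeniusNormedAddCommGroup Matrix.frobeniusNormedSpace
  Matrix.frobeniusNormedRing

attribute [local instance] Matrix.frobeniusNormedAlgebra

lemma mul_vecMulVec_aux {n : Type*} [Fintype n] (A : Matrix n n ℂ) (v w : n → ℂ) :
    A * vecMulVec v w = vecMulVec (A *ᵥ v) w := by
  ext i j
  simp [Matrix.mul_apply, vecMulVec_apply, Matrix.mulVec, dotProduct,
    Finset.sum_mul, mul_assoc]

lemma exp_mulVec_eigen {n : Type*} [Fintype n] [DecidableEq n]
    (A : Matrix n n ℂ) (v : n → ℂ) (μ : ℂ) (h : A *ᵥ v = μ • v) :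
    exp A *ᵥ v = Complex.exp μ • v := by
  have hpow : ∀ k : ℕ, A ^ k *ᵥ v = μ ^ k • v := by
    intro k
    induction k with
    | zero => simp
    | succ k ih =>
      rw [pow_succ, ← Matrix.mulVec_mulVec, h, Matrix.mulVec_smul, ih, smul_smul, pow_succ']
  let T : Matrix n n ℂ →ₗ[ℂ] (n → ℂ) :=
    { toFun := fun M => M *ᵥ v
      map_add' := fun M N => Matrix.add_mulVec M N v
      map_smul' := fun c M => Matrix.smul_mulVec c M v }
  have hT : Continuous T := T.continuous_of_finiteDimensional
  have hmap : exp A *ᵥ v = ∑' k : ℕ, (((k.factorial : ℂ)⁻¹) • A ^ k) *ᵥ v := by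
    rw [exp_eq_tsum (𝕂 := ℂ)]
    exact ((expSeries_summable' (𝕂 := ℂ) A).hasSum.map T hT).tsum_eq.symm
  rw [hmap]
  have : ∀ k : ℕ, (((k.factorial : ℂ)⁻¹) • A ^ k) *ᵥ v = (((k.factorial : ℂ)⁻¹) * μ ^ k) • v := by
    intro k
    rw [Matrix.smul_mulVec, hpow, smul_smul]
  simp_rw [this]
  have hs : Summable fun k : ℕ => ((k.factorial : ℂ)⁻¹ * μ ^ k) := by
    simpa [smul_eq_mul] using expSeries_summable' (𝕂 := ℂ) μ
  rw [hs.tsum_smul_const, Complex.exp_eq_exp_ℂ, exp_eq_tsum (𝕂 := ℂ)]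
  simp [smul_eq_mul]

/-- If the fast eigenvalues satisfy `Re(λ f) ≤ -Δ`, the propagator is exponentially close
to its slow part: for `t ≥ 0`,
`‖exp(t • L) - ∑_{s∈S} exp(λ s t) • r s (l s)ᴴ‖ ≤ (∑_{f∈F} ‖r f (l f)ᴴ‖) * exp(-Δ t)`
in the Frobenius norm. -/
theorem stmt_15 {n S F : Type*} [Fintype n] [DecidableEq n]
    [Fintype S] [DecidableEq S] [Fintype F] [DecidableEq F]
    (L : Matrix n n ℂ) (r l : S ⊕ F → n → ℂ) (lam : S ⊕ F → ℂ)
    (heig : ∀ i, L *ᵥ r i = lam i • r i)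
    (hbi : ∀ i j, star (l i) ⬝ᵥ r j = if i = j then 1 else 0)
    (hcomp : ∑ i : S ⊕ F, vecMulVec (r i) (star (l i)) = 1)
    (Δ : ℝ) (hΔ : 0 < Δ) (hfast : ∀ f : F, (lam (Sum.inr f)).re ≤ -Δ)
    (t : ℝ) (ht : 0 ≤ t) :
    ‖exp (t • L)
        - ∑ s : S, Complex.exp (lam (Sum.inl s) * t) •
            vecMulVec (r (Sum.inl s)) (star (l (Sum.inl s)))‖
      ≤ (∑ f : F, ‖vecMulVec (r (Sum.inr f)) (star (l (Sum.inr f)))‖) * Real.exp (-Δ * t) := by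
  have key : exp (t • L) = ∑ i : S ⊕ F,
      Complex.exp (lam i * t) • vecMulVec (r i) (star (l i)) := by
    calc exp (t • L) = exp (t • L) * 1 := by rw [mul_one]
      _ = ∑ i : S ⊕ F, exp (t • L) * vecMulVec (r i) (star (l i)) := by
          rw [← hcomp, Finset.mul_sum]
      _ = ∑ i : S ⊕ F, Complex.exp (lam i * t) • vecMulVec (r i) (star (l i)) := by
          refine Finset.sum_congr rfl fun i _ => ?_
          rw [mul_vecMulVec_aux, exp_mulVec_eigen (t • L) (r i) (lam i * t)
            (by rw [Matrix.smul_mulVec, heig]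
                ext a
                simp [Complex.real_smul, smul_eq_mul]
                ring)]
          ext a b
          simp [vecMulVec_apply, mul_assoc]
  have hdiff : exp (t • L)
      - ∑ s : S, Complex.exp (lam (Sum.inl s) * t) •
          vecMulVec (r (Sum.inl s)) (star (l (Sum.inl s)))
      = ∑ f : F, Complex.exp (lam (Sum.inr f) * t) •
          vecMulVec (r (Sum.inr f)) (star (l (Sum.inr f))) := by
    rw [key, Fintype.sum_sum_type]
    abel
  rw [hdiff]
  calc ‖∑ f : F, Complex.exp (lam (Sum.inr f) * t) •
          vecMulVec (r (Sum.inr f)) (star (l (Sum.inr f)))‖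
      ≤ ∑ f : F, ‖Complex.exp (lam (Sum.inr f) * t) •
          vecMulVec (r (Sum.inr f)) (star (l (Sum.inr f)))‖ := norm_sum_le _ _
    _ ≤ ∑ f : F, Real.exp (-Δ * t) * ‖vecMulVec (r (Sum.inr f)) (star (l (Sum.inr f)))‖ := by
        refine Finset.sum_le_sum fun f _ => ?_
        rw [norm_smul]
        refine mul_le_mul_of_nonneg_right ?_ (norm_nonneg _)
        rw [Complex.norm_exp]
        refine Real.exp_le_exp.2 ?_
        have : (lam (Sum.inr f) * (t : ℂ)).re = (lam (Sum.inr f)).re * t := by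
          simp [Complex.mul_re]
        rw [this]
        exact mul_le_mul_of_nonneg_right (hfast f) ht
    _ = (∑ f : F, ‖vecMulVec (r (Sum.inr f)) (star (l (Sum.inr f)))‖) * Real.exp (-Δ * t) := by
        rw [← Finset.mul_sum, mul_comm]
end

section
/- Let ι = S ⊕ F be a disjoint sum of finite types and let (Π i)_{i∈ι} be n×n complex matrices with Π i * Π j = (if i = j then Π i else 0) and ∑_{i∈ι} Π i = 1. Let λ : ι → ℂ, set L₀ := ∑_{i∈ι} λ i • Π i, P := ∑_{s∈S} Π s, and Q := ∑_{f∈F} Π f, and assume Re(λ s − λ f) > 0 for all s ∈ S and f ∈ F. Then for every n×n complex matrix L₁, the function τ ↦ exp(τ • L₀) * Q * L₁ * P * exp(−τ • L₀) is integrable on [0, ∞) and ∫_{0}^{∞} exp(τ • L₀) * Q * L₁ * P * exp(−τ • L₀) dτ = ∑_{s∈S} ∑_{f∈F} (λ s − λ f)⁻¹ • (Π f * L₁ * Π s). -/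
open Matrix NormedSpace

attribute [local instance] Matrix.frobeniusNormedAddCommGroup Matrix.frobeniusNormedSpace
  Matrix.frobeniusNormedRing

open MeasureTheory in
lemma stmt16_cexp_aux {c : ℂ} (hc : c.re < 0) :
    IntegrableOn (fun τ : ℝ => Complex.exp (τ * c)) (Set.Ioi 0) ∧
    ∫ τ in Set.Ioi (0:ℝ), Complex.exp (τ * c) = -c⁻¹ := by
  have hderiv : ∀ x : ℝ, HasDerivAt (fun τ : ℝ => c⁻¹ * Complex.exp (τ * c))
      (Complex.exp (x * c)) x := by
    intro x
    have h1 : HasDerivAt (fun τ : ℝ => (τ : ℂ) * c) c x := by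
      simpa using (Complex.ofRealCLM.hasDerivAt (x := x)).mul_const c
    have h2 := (h1.cexp).const_mul c⁻¹
    have hc0 : c ≠ 0 := fun h => by simp [h] at hc
    convert h2 using 1
    show Complex.exp (x * c) = c⁻¹ * (Complex.exp (x * c) * c)
    rw [mul_left_comm, inv_mul_cancel₀ hc0, mul_one]
    rfl
  have htend : Filter.Tendsto (fun τ : ℝ => c⁻¹ * Complex.exp (τ * c))
      Filter.atTop (nhds 0) := by
    rw [tendsto_zero_iff_norm_tendsto_zero]
    have : ∀ τ : ℝ, ‖c⁻¹ * Complex.exp (τ * c)‖ = ‖c⁻¹‖ * Real.exp (τ * c.re) := by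
      intro τ
      rw [norm_mul, Complex.norm_exp]
      norm_num
    simp_rw [this]
    rw [show (0:ℝ) = ‖c⁻¹‖ * 0 by ring]
    apply Filter.Tendsto.const_mul
    apply Real.tendsto_exp_atBot.comp
    exact Filter.Tendsto.atTop_mul_const_of_neg hc Filter.tendsto_id
  have hint : IntegrableOn (fun τ : ℝ => Complex.exp (τ * c)) (Set.Ioi 0) := by
    have hmeas : AEStronglyMeasurable (fun τ : ℝ => Complex.exp (τ * c))
        (volume.restrict (Set.Ioi (0:ℝ))) := by
      apply Continuous.aestronglyMeasurable
      exact Complex.continuous_exp.comp (by continuity)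
    refine Integrable.mono' (g := fun τ : ℝ => Real.exp (-(-c.re) * τ))
      (exp_neg_integrableOn_Ioi 0 (by linarith)) hmeas ?_
    filter_upwards with τ
    rw [Complex.norm_exp]
    norm_num [mul_comm]
  refine ⟨hint, ?_⟩
  have := integral_Ioi_of_hasDerivAt_of_tendsto' (a := 0)
    (fun x _ => hderiv x) hint htend
  rw [this]
  simp

section Aux

variable {n ι : Type*} [Fintype n] [DecidableEq n] [Fintype ι] [DecidableEq ι]

lemma stmt16_mul_aux (Prj : ι → Matrix n n ℂ)
    (horth : ∀ i j, Prj i * Prj j = if i = j then Prj i else 0) (a b : ι → ℂ) :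
    (∑ i, a i • Prj i) * (∑ j, b j • Prj j) = ∑ i, (a i * b i) • Prj i := by
  rw [Finset.sum_mul_sum]
  simp_rw [smul_mul_assoc, mul_smul_comm, horth, smul_ite, smul_zero, smul_smul,
    Finset.sum_ite_eq, Finset.mem_univ, if_true]

set_option maxHeartbeats 1000000 in
lemma stmt16_exp_aux (Prj : ι → Matrix n n ℂ) (lam : ι → ℂ)
    (horth : ∀ i j, Prj i * Prj j = if i = j then Prj i else 0)
    (hcomp : ∑ i : ι, Prj i = 1) (t : ℝ) :
    NormedSpace.exp (t • ∑ i : ι, lam i • Prj i) = ∑ i : ι, Complex.exp (t * lam i) • Prj i := by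
  have hL : t • ∑ i : ι, lam i • Prj i = ∑ i : ι, ((t : ℂ) * lam i) • Prj i := by
    rw [Finset.smul_sum]
    exact Finset.sum_congr rfl fun i _ => by rw [← smul_assoc, Complex.real_smul]
  have hpow : ∀ k : ℕ, (t • ∑ i : ι, lam i • Prj i) ^ k
      = ∑ i : ι, ((t : ℂ) * lam i) ^ k • Prj i := by
    intro k
    induction k with
    | zero => simp [hcomp]
    | succ k ih =>
      rw [pow_succ, ih, hL, stmt16_mul_aux Prj horth]
      simp_rw [← pow_succ]
  rw [exp_eq_tsum ℂ]
  simp_rw [hpow, Finset.smul_sum, smul_smul]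
  have hsum : ∀ i : ι, Summable fun k : ℕ => ((k.factorial : ℂ)⁻¹ * ((t:ℂ) * lam i) ^ k) • Prj i :=
    fun i => by
      have h1 : Summable fun k : ℕ => (k.factorial : ℂ)⁻¹ * ((t:ℂ) * lam i) ^ k := by
        simpa [smul_eq_mul] using expSeries_summable' (𝕂 := ℂ) ((t:ℂ) * lam i)
      exact h1.smul_const (Prj i)
  rw [Summable.tsum_finsetSum (fun i _ => hsum i)]
  have key : ∀ i : ι, ∑' k : ℕ, ((k.factorial : ℂ)⁻¹ * ((t:ℂ) * lam i) ^ k) • Prj i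
      = Complex.exp ((t:ℂ) * lam i) • Prj i := by
    intro i
    have hh : ∀ k : ℕ, (k.factorial : ℂ)⁻¹ * ((t:ℂ) * lam i) ^ k
        = (k.factorial : ℂ)⁻¹ • ((t:ℂ) * lam i) ^ k := fun k => (smul_eq_mul _ _).symm
    simp_rw [hh]
    have he : Complex.exp ((t:ℂ) * lam i) = ∑' k : ℕ, (k.factorial : ℂ)⁻¹ • ((t:ℂ) * lam i) ^ k := by
      rw [Complex.exp_eq_exp_ℂ, exp_eq_tsum ℂ]
    rw [(expSeries_summable' (𝕂 := ℂ) _).tsum_smul_const, he]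
  simp_rw [key]

end Aux

/-- For a spectral resolution `L₀ = ∑ λ i • Π i` with orthogonal projectors summing to `1`,
`P = ∑_{s∈S} Π s`, `Q = ∑_{f∈F} Π f`, and a spectral gap `Re(λ s - λ f) > 0`, the function
`τ ↦ exp(τ • L₀) * Q * L₁ * P * exp(-τ • L₀)` is integrable on `[0,∞)` with
`∫₀^∞ = ∑_{s,f} (λ s - λ f)⁻¹ • (Π f * L₁ * Π s)`. -/
theorem stmt_16 {n S F : Type*} [Fintype n] [DecidableEq n]
    [Fintype S] [DecidableEq S] [Fintype F] [DecidableEq F]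
    (Prj : S ⊕ F → Matrix n n ℂ) (lam : S ⊕ F → ℂ)
    (horth : ∀ i j, Prj i * Prj j = if i = j then Prj i else 0)
    (hcomp : ∑ i : S ⊕ F, Prj i = 1)
    (hgap : ∀ (s : S) (f : F), 0 < (lam (Sum.inl s) - lam (Sum.inr f)).re)
    (L1 : Matrix n n ℂ) :
    @MeasureTheory.IntegrableOn ℝ (Matrix n n ℂ) _ _ SeminormedAddGroup.toContinuousENorm
      (fun τ : ℝ =>
        NormedSpace.exp (τ • ∑ i : S ⊕ F, lam i • Prj i) * (∑ f : F, Prj (Sum.inr f)) * L1 *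
          (∑ s : S, Prj (Sum.inl s)) * NormedSpace.exp ((-τ) • ∑ i : S ⊕ F, lam i • Prj i))
      (Set.Ioi 0) MeasureTheory.volume ∧
    ∫ τ in Set.Ioi (0:ℝ),
        NormedSpace.exp (τ • ∑ i : S ⊕ F, lam i • Prj i) * (∑ f : F, Prj (Sum.inr f)) * L1 *
          (∑ s : S, Prj (Sum.inl s)) * NormedSpace.exp ((-τ) • ∑ i : S ⊕ F, lam i • Prj i)
      = ∑ s : S, ∑ f : F,
          (lam (Sum.inl s) - lam (Sum.inr f))⁻¹ •
            (Prj (Sum.inr f) * L1 * Prj (Sum.inl s)) := by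
  have hre : ∀ (s : S) (f : F), (lam (Sum.inr f) - lam (Sum.inl s)).re < 0 := by
    intro s f
    have := hgap s f
    simp only [Complex.sub_re] at this ⊢
    linarith
  -- rewrite the integrand
  have hfun : ∀ τ : ℝ,
      NormedSpace.exp (τ • ∑ i : S ⊕ F, lam i • Prj i) * (∑ f : F, Prj (Sum.inr f)) * L1 *
          (∑ s : S, Prj (Sum.inl s)) * NormedSpace.exp ((-τ) • ∑ i : S ⊕ F, lam i • Prj i)
      = ∑ s : S, ∑ f : F, Complex.exp (τ * (lam (Sum.inr f) - lam (Sum.inl s))) •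
          (Prj (Sum.inr f) * L1 * Prj (Sum.inl s)) := by
    intro τ
    rw [stmt16_exp_aux Prj lam horth hcomp τ, stmt16_exp_aux Prj lam horth hcomp (-τ)]
    have h1 : (∑ i : S ⊕ F, Complex.exp (τ * lam i) • Prj i) * (∑ f : F, Prj (Sum.inr f))
        = ∑ f : F, Complex.exp (τ * lam (Sum.inr f)) • Prj (Sum.inr f) := by
      rw [Finset.mul_sum]
      refine Finset.sum_congr rfl fun f _ => ?_
      rw [Finset.sum_mul]
      simp_rw [smul_mul_assoc, horth]
      simp
    have h2 : (∑ s : S, Prj (Sum.inl s)) * (∑ i : S ⊕ F, Complex.exp ((↑(-τ) : ℂ) * lam i) • Prj i)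
        = ∑ s : S, Complex.exp (-(τ:ℂ) * lam (Sum.inl s)) • Prj (Sum.inl s) := by
      push_cast
      rw [Finset.sum_mul]
      refine Finset.sum_congr rfl fun s _ => ?_
      rw [Finset.mul_sum]
      simp_rw [mul_smul_comm, horth]
      simp
    rw [h1, mul_assoc _ (∑ s : S, Prj (Sum.inl s)), h2]
    simp_rw [Finset.sum_mul, Finset.mul_sum, smul_mul_assoc, mul_smul_comm, smul_smul]
    rw [Finset.sum_comm]
    refine Finset.sum_congr rfl fun s _ => Finset.sum_congr rfl fun f _ => ?_
    rw [← Complex.exp_add, mul_assoc]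
    congr 2
    ring
  have hintone : ∀ (s : S) (f : F),
      @MeasureTheory.IntegrableOn ℝ (Matrix n n ℂ) _ _ SeminormedAddGroup.toContinuousENorm
      (fun τ : ℝ => Complex.exp (τ * (lam (Sum.inr f) - lam (Sum.inl s))) •
        (Prj (Sum.inr f) * L1 * Prj (Sum.inl s))) (Set.Ioi 0) MeasureTheory.volume :=
    fun s f => ((stmt16_cexp_aux (hre s f)).1).smul_const _
  have hint : @MeasureTheory.IntegrableOn ℝ (Matrix n n ℂ) _ _ SeminormedAddGroup.toContinuousENorm
      (fun τ : ℝ =>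
        NormedSpace.exp (τ • ∑ i : S ⊕ F, lam i • Prj i) * (∑ f : F, Prj (Sum.inr f)) * L1 *
          (∑ s : S, Prj (Sum.inl s)) * NormedSpace.exp ((-τ) • ∑ i : S ⊕ F, lam i • Prj i))
      (Set.Ioi 0) MeasureTheory.volume := by
    rw [show (fun τ : ℝ =>
        NormedSpace.exp (τ • ∑ i : S ⊕ F, lam i • Prj i) * (∑ f : F, Prj (Sum.inr f)) * L1 *
          (∑ s : S, Prj (Sum.inl s)) * NormedSpace.exp ((-τ) • ∑ i : S ⊕ F, lam i • Prj i))
      = fun τ : ℝ => ∑ s : S, ∑ f : F, Complex.exp (τ * (lam (Sum.inr f) - lam (Sum.inl s))) •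
          (Prj (Sum.inr f) * L1 * Prj (Sum.inl s)) from funext hfun]
    exact MeasureTheory.integrable_finset_sum _ fun s _ =>
      MeasureTheory.integrable_finset_sum _ fun f _ => hintone s f
  refine ⟨hint, ?_⟩
  rw [MeasureTheory.integral_congr_ae (Filter.Eventually.of_forall fun τ => hfun τ)]
  rw [MeasureTheory.integral_finset_sum _ fun s _ =>
    MeasureTheory.integrable_finset_sum _ fun f _ => hintone s f]
  refine Finset.sum_congr rfl fun s _ => ?_
  rw [MeasureTheory.integral_finset_sum _ fun f _ => hintone s f]
  refine Finset.sum_congr rfl fun f _ => ?_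
  rw [integral_smul_const, (stmt16_cexp_aux (hre s f)).2]
  congr 1
  rw [← inv_neg, neg_sub]
end

section
/- Let L and Pε be n×n complex matrices, S a finite type, χR an n×S complex matrix and χL' an S×n complex matrix. Assume Pε * (χR * χL') = Pε and (1 − Pε) * L * Pε = 0. Then the maps K := Pε * χR and F := χL' * L * Pε * χR satisfy the invariance condition L * K = K * F. -/
/-- If `Pε * (χR * χL') = Pε` and `(1 - Pε) * L * Pε = 0`, then the maps
`K = Pε * χR` and `F = χL' * L * Pε * χR` satisfy the invariance condition
`L * K = K * F`. -/
theorem stmt_17 {n S : Type*} [Fintype n] [DecidableEq n] [Fintype S]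
    (L Peps : Matrix n n ℂ) (chiR : Matrix n S ℂ) (chiL : Matrix S n ℂ)
    (hP : Peps * (chiR * chiL) = Peps)
    (hinv : (1 - Peps) * L * Peps = 0) :
    L * (Peps * chiR) = (Peps * chiR) * (chiL * L * Peps * chiR) := by
  have h1 : L * Peps = Peps * (L * Peps) := by
    have := hinv
    rw [Matrix.sub_mul, Matrix.sub_mul, one_mul, sub_eq_zero] at this
    rw [← Matrix.mul_assoc]; exact this
  calc L * (Peps * chiR) = (L * Peps) * chiR := by rw [Matrix.mul_assoc]
    _ = Peps * (L * Peps) * chiR := by rw [← h1]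
    _ = (Peps * (chiR * chiL)) * (L * Peps) * chiR := by rw [hP, Matrix.mul_assoc]
    _ = (Peps * chiR) * (chiL * L * Peps * chiR) := by
        simp only [Matrix.mul_assoc]
end

section
/- Let κ > 0 and ω_ph, ω_eg be real numbers, and set γ₊ := κ/2 + I*(ω_ph + ω_eg) and γ₋ := κ/2 + I*(ω_ph − ω_eg) as complex numbers (both nonzero since κ > 0). Let K be the 2×2 complex matrix with entries K j k = 1/γ_j + 1/(conj γ_k) for j, k ∈ {+, −}. Then: (a) K is Hermitian; (b) trace K = κ/‖γ₊‖² + κ/‖γ₋‖², which is strictly positive; (c) det K = −4*ω_eg²/(‖γ₊‖² * ‖γ₋‖²); in particular, if ω_eg ≠ 0 then det K < 0, so the Hermitian matrix K is not positive semidefinite (the second-order adiabatic-elimination generator violates complete positivity). -/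
open scoped ComplexOrder
lemma aux_inv_add (γ : ℂ) (hγ : γ ≠ 0) :
    1/γ + 1/(starRingEnd ℂ) γ = ((2*γ.re / ‖γ‖^2 : ℝ) : ℂ) := by
  have h2 : (starRingEnd ℂ) γ ≠ 0 := by simpa using hγ
  have hn : (‖γ‖:ℂ)^2 = γ * (starRingEnd ℂ) γ := by rw [← Complex.mul_conj']
  push_cast
  rw [hn]
  field_simp
  rw [add_comm, Complex.add_conj]
  push_cast; ring

lemma aux_det (γ δ : ℂ) (hγ : γ ≠ 0) (hδ : δ ≠ 0) :
    (1/γ + 1/(starRingEnd ℂ) γ) * (1/δ + 1/(starRingEnd ℂ) δ)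
      - (1/γ + 1/(starRingEnd ℂ) δ) * (1/δ + 1/(starRingEnd ℂ) γ)
      = (γ - δ) * ((starRingEnd ℂ) δ - (starRingEnd ℂ) γ) / ((‖γ‖:ℂ)^2 * (‖δ‖:ℂ)^2) := by
  have h2 : (starRingEnd ℂ) γ ≠ 0 := by simpa using hγ
  have h3 : (starRingEnd ℂ) δ ≠ 0 := by simpa using hδ
  have hnγ : (‖γ‖:ℂ)^2 = γ * (starRingEnd ℂ) γ := by rw [← Complex.mul_conj']
  have hnδ : (‖δ‖:ℂ)^2 = δ * (starRingEnd ℂ) δ := by rw [← Complex.mul_conj']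
  rw [hnγ, hnδ]; field_simp; ring

/-- Properties of the dissipator coefficient matrix `K j k = 1/γ_j + 1/conj(γ_k)`
(indexed by `Bool`, with `true = +` and `false = -`): it is Hermitian, has strictly
positive trace `κ/‖γ₊‖² + κ/‖γ₋‖²`, and determinant `-4 ω_eg²/(‖γ₊‖² ‖γ₋‖²)`; in
particular if `ω_eg ≠ 0` the determinant is negative and `K` is not positive
semidefinite (the second-order adiabatic-elimination generator is not of GKSL form). -/
theorem stmt_18 (κ ωph ωeg : ℝ) (hκ : 0 < κ) :
    let γp : ℂ := κ / 2 + Complex.I * (ωph + ωeg)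
    let γn : ℂ := κ / 2 + Complex.I * (ωph - ωeg)
    let K : Matrix Bool Bool ℂ := Matrix.of fun j k =>
      1 / (if j then γp else γn) + 1 / (starRingEnd ℂ) (if k then γp else γn)
    γp ≠ 0 ∧ γn ≠ 0 ∧
    K.IsHermitian ∧
    K.trace = ((κ / ‖γp‖ ^ 2 + κ / ‖γn‖ ^ 2 : ℝ) : ℂ) ∧
    (0 : ℝ) < κ / ‖γp‖ ^ 2 + κ / ‖γn‖ ^ 2 ∧
    K.det = ((-(4 * ωeg ^ 2) / (‖γp‖ ^ 2 * ‖γn‖ ^ 2) : ℝ) : ℂ) ∧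
    (ωeg ≠ 0 → K.det.re < 0 ∧ ¬ K.PosSemidef) := by
  intro γp γn K
  have hpre : γp.re = κ / 2 := by simp [γp]
  have hnre : γn.re = κ / 2 := by simp [γn]
  have hγp : γp ≠ 0 := by
    intro h; rw [h] at hpre; simp at hpre; linarith
  have hγn : γn ≠ 0 := by
    intro h; rw [h] at hnre; simp at hnre; linarith
  have hnp : (0:ℝ) < ‖γp‖ := norm_pos_iff.mpr hγp
  have hnn : (0:ℝ) < ‖γn‖ := norm_pos_iff.mpr hγn
  have hherm : K.IsHermitian := by
    ext j k
    cases j <;> cases k <;>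
      simp [K, Matrix.conjTranspose_apply, Complex.star_def, map_add, map_div₀,
        Complex.conj_conj, add_comm]
  have htr : K.trace = ((κ / ‖γp‖ ^ 2 + κ / ‖γn‖ ^ 2 : ℝ) : ℂ) := by
    rw [Matrix.trace, Fintype.sum_bool]
    have e1 : K.diag true = 1/γp + 1/(starRingEnd ℂ) γp := rfl
    have e0 : K.diag false = 1/γn + 1/(starRingEnd ℂ) γn := rfl
    rw [e1, e0, aux_inv_add γp hγp, aux_inv_add γn hγn, hpre, hnre]
    push_cast; ring
  have hdet : K.det = ((-(4 * ωeg ^ 2) / (‖γp‖ ^ 2 * ‖γn‖ ^ 2) : ℝ) : ℂ) := by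
    rw [← Matrix.det_submatrix_equiv_self finTwoEquiv K, Matrix.det_fin_two]
    simp only [Matrix.submatrix_apply, finTwoEquiv, Equiv.coe_fn_mk, Fin.isValue, K,
      Matrix.of_apply]
    norm_num
    simp only [← one_div]
    rw [aux_det γn γp hγn hγp]
    have hd : γn - γp = Complex.I * (-(2*ωeg)) := by
      simp only [γp, γn]; push_cast; ring
    have hd2 : (starRingEnd ℂ) γp - (starRingEnd ℂ) γn = Complex.I * (-(2*ωeg)) := by
      rw [← map_sub, show γp - γn = Complex.I * (2*(ωeg:ℂ)) by simp only [γp, γn]; push_cast; ring]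
      simp [Complex.ext_iff]
    rw [hd, hd2]
    have : Complex.I * (-(2*(ωeg:ℂ))) * (Complex.I * (-(2*(ωeg:ℂ)))) = -(4*ωeg^2 : ℝ) := by
      push_cast
      rw [show Complex.I * -(2*(ωeg:ℂ)) * (Complex.I * -(2*(ωeg:ℂ))) = Complex.I^2 * (4*(ωeg:ℂ)^2) by ring, Complex.I_sq]
      ring
    rw [this]
    push_cast
    rw [mul_comm ((‖γn‖:ℂ)^2)]
  refine ⟨hγp, hγn, hherm, htr, by positivity, hdet, ?_⟩
  intro hω
  have hdre : K.det.re = -(4 * ωeg ^ 2) / (‖γp‖ ^ 2 * ‖γn‖ ^ 2) := by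
    rw [hdet, Complex.ofReal_re]
  have hlt : K.det.re < 0 := by
    rw [hdre]
    have : 0 < 4 * ωeg ^ 2 := by positivity
    apply div_neg_of_neg_of_pos (by linarith) (by positivity)
  refine ⟨hlt, fun hPSD => ?_⟩
  have hge : (0:ℝ) ≤ ∏ i, hPSD.1.eigenvalues i :=
    Finset.prod_nonneg fun i _ => hPSD.eigenvalues_nonneg i
  have h2 : K.det.re = ∏ i, hPSD.1.eigenvalues i := by
    rw [hPSD.1.det_eq_prod_eigenvalues, ← RCLike.ofReal_prod]; simp
  linarith
end
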